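/- arXiv:2112.00692 — 2 statements merged into one kernel-verified Lean document; each statement's English description precedes it below -/
import Mathlib

section
/- A de la Vallée-Poussin type lemma for Besov norms (Lemma 1.13): Fix p ∈ [1,∞], r ∈ [1,∞), and s ∈ (0,1). For every measurable f : 𝕋 → ℝ² with ‖f‖_{Ḃ^s_{p,r}} < ∞ there exists an admissible weight μ (depending on f) such that ‖f‖_{Ḃ^{s,μ}_{p,r}} < ∞. -/
open MeasureTheory Real Set Filter Function
open scoped ENNReal NNReal Topology

noncomputable section

namespace Peskin

abbrev E2 : Type := EuclideanSpace ℝ (Fin 2)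

/-- The fundamental-domain measure of the torus `𝕋 = ℝ/(2πℤ)`. -/
def tmeas : Measure ℝ := volume.restrict (Ioc (-π) π)

/-- Difference operator `δ_α f (θ) = f (θ+α) - f θ`. -/
def dd {E : Type*} [AddGroup E] (α : ℝ) (f : ℝ → E) : ℝ → E := fun θ => f (θ + α) - f θ

/-- Divided difference `D_α f = δ_α f / α`. -/
def Dd (α : ℝ) (f : ℝ → E2) : ℝ → E2 := fun θ => α⁻¹ • (f (θ + α) - f θ)

/-- Arc-chord number `|X|_*`. -/
def arcChord (X : ℝ → E2) : ℝ :=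
  sInf {r : ℝ | ∃ θ α : ℝ, α ∈ Icc (-π) π ∧ α ≠ 0 ∧ r = ‖Dd α X θ‖}

/-- `L^p` norm over the torus, valued in `ℝ≥0∞`. -/
def lpT {E : Type*} [NormedAddCommGroup E] (p : ℝ≥0∞) (f : ℝ → E) : ℝ≥0∞ :=
  eLpNorm f p tmeas

/-- Admissible weight (Definition 1.4 of the paper). -/
structure AdmissibleWeight (μ : ℝ → ℝ) : Prop where
  one_le : ∀ r : ℝ, 0 ≤ r → 1 ≤ μ r
  mono : MonotoneOn μ (Ici 0)
  tendsto_top : Tendsto μ atTop atTop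
  doubling : ∃ c₀ : ℝ, 0 < c₀ ∧ ∀ r : ℝ, 0 ≤ r → μ (2 * r) ≤ c₀ * μ r
  log_decay : AntitoneOn (fun r => μ r / Real.log (4 + r)) (Ici 0)

/-- The measure `dβ/|β|` on the fundamental domain. -/
def bmeas : Measure ℝ := tmeas.withDensity fun β => ENNReal.ofReal |β|⁻¹

/-- `L^r(dβ/|β|)`-type norm, with exponent `r ∈ [1,∞]`, of an `ℝ≥0∞`-valued function. -/
def eNorm (r : ℝ≥0∞) (g : ℝ → ℝ≥0∞) : ℝ≥0∞ :=
  if r = ∞ then essSup g bmeas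
  else (∫⁻ β, g β ^ r.toReal ∂bmeas) ^ (1 / r.toReal)

/-- Weighted homogeneous Besov seminorm `Ḃ^{s,μ}_{p,r}` over the torus. -/
def besovW {E : Type*} [NormedAddCommGroup E] (s : ℝ) (p r : ℝ≥0∞) (μ : ℝ → ℝ)
    (f : ℝ → E) : ℝ≥0∞ :=
  eNorm r fun β => ENNReal.ofReal (μ |β|⁻¹) * lpT p (dd β f) / ENNReal.ofReal (|β| ^ s)

/-- Homogeneous Besov seminorm `Ḃ^s_{p,r}` over the torus. -/
def besov {E : Type*} [NormedAddCommGroup E] (s : ℝ) (p r : ℝ≥0∞) (f : ℝ → E) : ℝ≥0∞ :=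
  besovW s p r (fun _ => 1) f

/-- The `k`-th Fourier coefficient of the `i`-th component of `g`. -/
def fcoef (g : ℝ → E2) (k : ℤ) (i : Fin 2) : ℂ :=
  (2 * π : ℝ)⁻¹ •
    ∫ θ in Ioc (-π) π, Complex.exp (-Complex.I * (k : ℂ) * (θ : ℂ)) * Complex.ofReal (g θ i)

/-- Homogeneous Sobolev seminorm `Ḣ^s` over the torus. -/
def hSob (s : ℝ) (g : ℝ → E2) : ℝ≥0∞ :=
  (∑' k : ℤ, ENNReal.ofReal (|(k : ℝ)| ^ (2 * s)) *
      (ENNReal.ofReal ‖fcoef g k 0‖ ^ 2 + ENNReal.ofReal ‖fcoef g k 1‖ ^ 2)) ^ (1 / 2 : ℝ)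

/-- The norm `‖f‖_{C^μ_T}`. -/
def cNorm (μ : ℝ → ℝ) (T : ℝ) (f : ℝ → ℝ → E2) : ℝ≥0∞ :=
  ∫⁻ β in Ioc (-π) π,
    ENNReal.ofReal (μ |β|⁻¹) *
        essSup (fun t => lpT 2 (dd β (f t))) (volume.restrict (Icc 0 T)) /
      ENNReal.ofReal (|β| ^ (3 / 2 : ℝ))

/-- The norm `‖f‖_{D^μ_T}`. -/
def dNorm (μ : ℝ → ℝ) (T : ℝ) (f : ℝ → ℝ → E2) : ℝ≥0∞ :=
  ∫⁻ β in Ioc (-π) π,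
    ENNReal.ofReal (μ |β|⁻¹) *
        (∫⁻ t in Icc 0 T, hSob (1 / 2) (dd β (f t)) ^ 2) ^ (1 / 2 : ℝ) /
      ENNReal.ofReal (|β| ^ (3 / 2 : ℝ))

/-- The norm `‖g‖_{B^μ}`. -/
def bNorm (μ : ℝ → ℝ) (g : ℝ → E2) : ℝ≥0∞ :=
  ∫⁻ β in Ioc (-π) π,
    ENNReal.ofReal (μ |β|⁻¹) * lpT 2 (dd β g) / ENNReal.ofReal (|β| ^ (3 / 2 : ℝ))

/-- A tension map `T(z) = 𝒯(|z|) z / |z|` with `𝒯(0) = 0`. -/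
def IsTensionMap (T : E2 → E2) : Prop :=
  ∃ 𝒯 : ℝ → ℝ, 𝒯 0 = 0 ∧ T 0 = 0 ∧ ∀ z : E2, z ≠ 0 → T z = (𝒯 ‖z‖ / ‖z‖) • z

/-- Quantitative tension assumptions with constants `lam, C₁, C₂`. -/
def QuantTension (T : E2 → E2) (lam C₁ C₂ : ℝ) : Prop :=
  ContDiff ℝ 2 T ∧ (∀ z : E2, ‖fderiv ℝ T z‖ ≤ C₁) ∧
    (∀ z : E2, ‖iteratedFDeriv ℝ 2 T z‖ ≤ C₂) ∧
    ∀ z v : E2, lam * ‖v‖ ^ 2 ≤ @inner ℝ E2 _ v (fderiv ℝ T z v)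

/-- The unit vector `ẑ`. -/
def zhat (z : E2) : E2 := ‖z‖⁻¹ • z

/-- The perpendicular vector `z^⊥`. -/
def zperp (z : E2) : E2 := (EuclideanSpace.equiv (Fin 2) ℝ).symm ![-(z 1), z 0]

/-- The matrix `P(z) = ẑ⊗ẑ - ẑ^⊥⊗ẑ^⊥` applied to `v`. -/
def matP (z v : E2) : E2 :=
  (@inner ℝ E2 _ (zhat z) v) • zhat z - (@inner ℝ E2 _ (zhat (zperp z)) v) • zhat (zperp z)

/-- The matrix `R(z) = ẑ⊗ẑ^⊥ + ẑ^⊥⊗ẑ` applied to `v`. -/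
def matR (z v : E2) : E2 :=
  (@inner ℝ E2 _ (zhat (zperp z)) v) • zhat z + (@inner ℝ E2 _ (zhat z) v) • zhat (zperp z)

/-- The kernel matrix `K[X](θ,α)` applied to the vector `v`. -/
def kerK (X : ℝ → E2) (θ α : ℝ) (v : E2) : E2 :=
  (4 * π : ℝ)⁻¹ •
    (((@inner ℝ E2 _ (deriv X (θ + α)) (matP (Dd α X θ) (deriv X θ))) / ‖Dd α X θ‖ ^ 2) • v -
      ((@inner ℝ E2 _ (deriv X (θ + α)) (matR (Dd α X θ) (deriv X θ))) / ‖Dd α X θ‖ ^ 2) •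
        matR (Dd α X θ) v +
      ((@inner ℝ E2 _ (deriv X (θ + α)) (matP (Dd α X θ) (deriv X θ) - deriv X θ)) /
          ‖Dd α X θ‖ ^ 2) • matP (Dd α X θ) v)

/-- The θ-derivative `X'` of the time dependent family `X`. -/
def pd (X : ℝ → ℝ → E2) : ℝ → ℝ → E2 := fun t θ => deriv (X t) θ

/-- `X` solves the Peskin equation with tension map `Tm` on the time set `I`
(principal value formulation). -/
def SolvesPeskin (Tm : E2 → E2) (X : ℝ → ℝ → E2) (I : Set ℝ) : Prop :=
  ∀ t ∈ I, ∀ θ : ℝ,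
    Tendsto
      (fun ε : ℝ =>
        ∫ α in {a : ℝ | ε ≤ |a| ∧ |a| ≤ π},
          (α ^ 2)⁻¹ • kerK (X t) θ α (Tm (deriv (X t) (θ + α)) - Tm (deriv (X t) θ)))
      (nhdsWithin 0 (Ioi 0)) (nhds (deriv (fun s => deriv (X s) θ) t))

/-- Strong solution of the Peskin problem on `[0,T]` with tension map `Tm`
and initial data `X₀`. -/
structure IsStrongSolution (Tm : E2 → E2) (T : ℝ) (X₀ : ℝ → E2) (X : ℝ → ℝ → E2) : Prop where
  periodic : ∀ t : ℝ, Periodic (X t) (2 * π)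
  smooth : ContDiffOn ℝ 2 (fun q : ℝ × ℝ => X q.1 q.2) (Ioc 0 T ×ˢ (univ : Set ℝ))
  solves : SolvesPeskin Tm X (Ioc 0 T)
  arc_chord : ∃ r : ℝ, 0 < r ∧ ∀ t ∈ Icc 0 T, r ≤ arcChord (X t)
  init : Tendsto (fun t => lpT ∞ (fun θ => deriv (X t) θ - deriv X₀ θ))
      (nhdsWithin 0 (Ioi 0)) (nhds 0)

/-- A bound `C` for the `C^{k,γ}` norm of `f` on the set `s`. -/
def CkHolderOn {E F : Type*} [NormedAddCommGroup E] [NormedSpace ℝ E] [NormedAddCommGroup F]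
    [NormedSpace ℝ F] (k : ℕ) (γ : ℝ) (f : E → F) (s : Set E) (C : ℝ) : Prop :=
  ContDiffOn ℝ k f s ∧
    (∀ i : ℕ, i ≤ k → ∀ x ∈ s, ‖iteratedFDerivWithin ℝ i f s x‖ ≤ C) ∧
    ∀ x ∈ s, ∀ y ∈ s,
      ‖iteratedFDerivWithin ℝ k f s x - iteratedFDerivWithin ℝ k f s y‖ ≤ C * ‖x - y‖ ^ γ

/-- A strong solution enjoying the standard a priori bounds. -/
def GoodSol (Tm : E2 → E2) (μ : ℝ → ℝ) (M ρ Cstar c lam T : ℝ) (X₀ : ℝ → E2)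
    (X : ℝ → ℝ → E2) : Prop :=
  Periodic X₀ (2 * π) ∧ ContDiff ℝ 1 X₀ ∧ bNorm μ (deriv X₀) ≤ ENNReal.ofReal M ∧
    0 < arcChord X₀ ∧ IsStrongSolution Tm T X₀ X ∧ (∀ t ∈ Icc 0 T, ρ ≤ arcChord (X t)) ∧
    cNorm μ T (pd X) + ENNReal.ofReal (c * Real.sqrt lam) * dNorm μ T (pd X) ≤
      ENNReal.ofReal (Cstar * M)

/-- A smooth-on-`(0,T]` solution enjoying the standard a priori bounds. -/
def AprioriSol (Tm : E2 → E2) (μ : ℝ → ℝ) (M ρ Cstar c lam T : ℝ) (X : ℝ → ℝ → E2) : Prop :=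
  (∀ t : ℝ, Periodic (X t) (2 * π)) ∧
    ContDiffOn ℝ 2 (fun q : ℝ × ℝ => X q.1 q.2) (Ioc 0 T ×ˢ (univ : Set ℝ)) ∧
    SolvesPeskin Tm X (Ioc 0 T) ∧ (∀ t ∈ Icc 0 T, ρ ≤ arcChord (X t)) ∧
    cNorm μ T (pd X) + ENNReal.ofReal (c * Real.sqrt lam) * dNorm μ T (pd X) ≤
      ENNReal.ofReal (Cstar * M)


/-! ### Auxiliary construction for Lemma 1.13 -/

/-- Auxiliary slowly growing weight used in the de la Vallée-Poussin lemma. -/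
def vpw (c : ℕ → ℝ) (a R : ℝ) : ℝ :=
  ⨅ n : ℕ, 2 ^ (((n : ℝ) + 1) * a) * max 1 (Real.log (4 + R) / c n)

lemma vpw_term_one_le {c : ℕ → ℝ} {a : ℝ} (ha : 0 ≤ a) (n : ℕ) (R : ℝ) :
    1 ≤ 2 ^ (((n : ℝ) + 1) * a) * max 1 (Real.log (4 + R) / c n) := by
  have h1 : (1 : ℝ) ≤ 2 ^ (((n : ℝ) + 1) * a) := by
    rw [show (1 : ℝ) = (2 : ℝ) ^ (0 : ℝ) by simp]
    exact Real.rpow_le_rpow_of_exponent_le (by norm_num) (by positivity)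
  calc (1 : ℝ) = 1 * 1 := by ring
    _ ≤ _ := mul_le_mul h1 (le_max_left _ _) zero_le_one (le_trans zero_le_one h1)

lemma vpw_bddBelow {c : ℕ → ℝ} {a : ℝ} (ha : 0 ≤ a) (R : ℝ) :
    BddBelow (Set.range fun n : ℕ => 2 ^ (((n : ℝ) + 1) * a) *
      max 1 (Real.log (4 + R) / c n)) :=
  ⟨1, by rintro x ⟨n, rfl⟩; exact vpw_term_one_le ha n R⟩

lemma one_le_vpw {c : ℕ → ℝ} {a : ℝ} (ha : 0 ≤ a) (R : ℝ) : 1 ≤ vpw c a R :=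
  le_ciInf fun n => vpw_term_one_le ha n R

lemma vpw_le {c : ℕ → ℝ} {a : ℝ} (ha : 0 ≤ a) (n : ℕ) (R : ℝ) :
    vpw c a R ≤ 2 ^ (((n : ℝ) + 1) * a) * max 1 (Real.log (4 + R) / c n) :=
  ciInf_le (vpw_bddBelow ha R) n

lemma vpw_le_of_log_le {c : ℕ → ℝ} {a : ℝ} (ha : 0 ≤ a) (hc : ∀ n, 0 < c n) (n : ℕ)
    {R : ℝ} (hR : Real.log (4 + R) ≤ c n) : vpw c a R ≤ 2 ^ (((n : ℝ) + 1) * a) := by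
  refine (vpw_le ha n R).trans ?_
  rw [max_eq_left ((div_le_one (hc n)).2 hR), mul_one]

lemma log_four_add_pos {R : ℝ} (hR : 0 ≤ R) : 0 < Real.log (4 + R) :=
  Real.log_pos (by linarith)

lemma log_four_add_mono {R R' : ℝ} (hR : 0 ≤ R) (h : R ≤ R') :
    Real.log (4 + R) ≤ Real.log (4 + R') :=
  Real.log_le_log (by linarith) (by linarith)

lemma vpw_admissible {c : ℕ → ℝ} {a : ℝ} (ha : 0 < a) (hc : ∀ n, 0 < c n)
    (hcm : Monotone c) : AdmissibleWeight (vpw c a) := by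
  have ha' : 0 ≤ a := ha.le
  have h2a1 : (1 : ℝ) ≤ 2 ^ a := by
    rw [show (1 : ℝ) = (2 : ℝ) ^ (0 : ℝ) by simp]
    exact Real.rpow_le_rpow_of_exponent_le (by norm_num) ha'
  have hsplit : ∀ n : ℕ, (2 : ℝ) ^ (((n : ℝ) + 1) * a) = ((2 : ℝ) ^ a) ^ (n + 1) := by
    intro n
    rw [mul_comm, Real.rpow_mul (by norm_num : (0:ℝ) ≤ 2),
      show ((n : ℝ) + 1) = ((n + 1 : ℕ) : ℝ) by push_cast; ring, Real.rpow_natCast]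
  refine ⟨fun R _ => one_le_vpw ha' R, ?_, ?_, ⟨2, two_pos, ?_⟩, ?_⟩
  · -- monotone
    intro R hR R' hR' h
    refine le_ciInf fun n => (vpw_le ha' n R).trans ?_
    have := log_four_add_mono hR h
    gcongr
    exact (hc n).le
  · -- tendsto atTop
    rw [tendsto_atTop]
    intro b
    have h1lt : (1 : ℝ) < 2 ^ a := by
      rw [show (1 : ℝ) = (2 : ℝ) ^ (0 : ℝ) by simp]
      exact Real.rpow_lt_rpow_of_exponent_lt (by norm_num) ha
    have htop : Tendsto (fun n : ℕ => ((2 : ℝ) ^ a) ^ (n + 1)) atTop atTop :=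
      (tendsto_pow_atTop_atTop_of_one_lt h1lt).comp (tendsto_add_atTop_nat 1)
    obtain ⟨N, hN⟩ := (tendsto_atTop.1 htop b).exists
    filter_upwards [eventually_ge_atTop (max 0 (Real.exp (b * c N)))] with R hR
    have hR0 : 0 ≤ R := le_trans (le_max_left _ _) hR
    have hRe : Real.exp (b * c N) ≤ R := le_trans (le_max_right _ _) hR
    refine le_ciInf fun n => ?_
    rcases le_or_gt N n with hn | hn
    · calc b ≤ ((2:ℝ) ^ a) ^ (N + 1) := hN
        _ ≤ ((2:ℝ) ^ a) ^ (n + 1) := pow_le_pow_right₀ h2a1 (by omega)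
        _ = 2 ^ (((n : ℝ) + 1) * a) := (hsplit n).symm
        _ ≤ _ := le_mul_of_one_le_right (by positivity) (le_max_left _ _)
    · have hcn : c n ≤ c N := hcm hn.le
      have hlog : b * c N ≤ Real.log (4 + R) := by
        calc b * c N = Real.log (Real.exp (b * c N)) := (Real.log_exp _).symm
          _ ≤ Real.log (4 + R) := Real.log_le_log (Real.exp_pos _) (by linarith)
      have hb : b ≤ Real.log (4 + R) / c N := (le_div_iff₀ (hc N)).2 hlog
      calc b ≤ Real.log (4 + R) / c N := hb
        _ ≤ Real.log (4 + R) / c n :=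
          div_le_div_of_nonneg_left (log_four_add_pos hR0).le (hc n) hcn
        _ ≤ max 1 (Real.log (4 + R) / c n) := le_max_right _ _
        _ ≤ _ := by
          refine le_mul_of_one_le_left ?_ ?_
          · exact le_trans zero_le_one (le_max_left _ _)
          · rw [show (1 : ℝ) = (2 : ℝ) ^ (0 : ℝ) by simp]
            exact Real.rpow_le_rpow_of_exponent_le (by norm_num) (by positivity)
  · -- doubling
    intro R hR
    have key : ∀ n : ℕ, 2 ^ (((n : ℝ) + 1) * a) * max 1 (Real.log (4 + 2 * R) / c n) ≤
        2 * (2 ^ (((n : ℝ) + 1) * a) * max 1 (Real.log (4 + R) / c n)) := by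
      intro n
      have hl2 : Real.log (4 + 2 * R) ≤ 2 * Real.log (4 + R) := by
        have h2 : 4 + 2 * R ≤ (4 + R) ^ 2 := by nlinarith
        calc Real.log (4 + 2 * R) ≤ Real.log ((4 + R) ^ 2) :=
              Real.log_le_log (by linarith) h2
          _ = 2 * Real.log (4 + R) := by
              rw [Real.log_pow]; push_cast; ring
      have hmax : max 1 (Real.log (4 + 2 * R) / c n) ≤
          2 * max 1 (Real.log (4 + R) / c n) := by
        apply max_le
        · nlinarith [le_max_left 1 (Real.log (4 + R) / c n)]
        · calc Real.log (4 + 2 * R) / c n ≤ 2 * Real.log (4 + R) / c n := by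
                gcongr; exact (hc n).le
            _ = 2 * (Real.log (4 + R) / c n) := by ring
            _ ≤ 2 * max 1 (Real.log (4 + R) / c n) := by
                nlinarith [le_max_right 1 (Real.log (4 + R) / c n)]
      calc 2 ^ (((n : ℝ) + 1) * a) * max 1 (Real.log (4 + 2 * R) / c n)
          ≤ 2 ^ (((n : ℝ) + 1) * a) * (2 * max 1 (Real.log (4 + R) / c n)) := by
            have h0 : (0:ℝ) ≤ 2 ^ (((n : ℝ) + 1) * a) := by positivity
            exact mul_le_mul_of_nonneg_left hmax h0
        _ = 2 * (2 ^ (((n : ℝ) + 1) * a) * max 1 (Real.log (4 + R) / c n)) := by ring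
    have hdiv : vpw c a (2 * R) / 2 ≤ vpw c a R := by
      refine le_ciInf fun n => ?_
      rw [div_le_iff₀ (by norm_num : (0:ℝ) < 2)]
      calc vpw c a (2 * R) ≤ _ := vpw_le ha' n (2 * R)
        _ ≤ 2 * (2 ^ (((n : ℝ) + 1) * a) * max 1 (Real.log (4 + R) / c n)) := key n
        _ = (2 ^ (((n : ℝ) + 1) * a) * max 1 (Real.log (4 + R) / c n)) * 2 := by ring
    linarith [hdiv, (div_le_iff₀ (by norm_num : (0:ℝ) < 2)).1 hdiv]
  · -- log decay
    intro R hR R' hR' hle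
    simp only [mem_Ici] at hR hR'
    have hR'0 : (0:ℝ) ≤ R' := hR'
    have hlR : 0 < Real.log (4 + R) := log_four_add_pos hR
    have hlR' : 0 < Real.log (4 + R') := log_four_add_pos hR'0
    have key : ∀ n : ℕ, vpw c a R' * Real.log (4 + R) ≤
        (2 ^ (((n : ℝ) + 1) * a) * max 1 (Real.log (4 + R) / c n)) * Real.log (4 + R') := by
      intro n
      have h0 : (0:ℝ) ≤ 2 ^ (((n : ℝ) + 1) * a) := by positivity
      have h1 : (2 ^ (((n : ℝ) + 1) * a) * max 1 (Real.log (4 + R') / c n)) *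
          Real.log (4 + R) ≤
          (2 ^ (((n : ℝ) + 1) * a) * max 1 (Real.log (4 + R) / c n)) * Real.log (4 + R') := by
        have e1 : max 1 (Real.log (4 + R') / c n) * Real.log (4 + R) =
            max (Real.log (4 + R)) (Real.log (4 + R') * Real.log (4 + R) / c n) := by
          rw [max_mul_of_nonneg _ _ hlR.le, one_mul, div_mul_eq_mul_div]
        have e2 : max 1 (Real.log (4 + R) / c n) * Real.log (4 + R') =
            max (Real.log (4 + R')) (Real.log (4 + R) * Real.log (4 + R') / c n) := by
          rw [max_mul_of_nonneg _ _ hlR'.le, one_mul, div_mul_eq_mul_div]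
        calc (2 ^ (((n : ℝ) + 1) * a) * max 1 (Real.log (4 + R') / c n)) * Real.log (4 + R)
            = 2 ^ (((n : ℝ) + 1) * a) *
                max (Real.log (4 + R)) (Real.log (4 + R') * Real.log (4 + R) / c n) := by
              rw [mul_assoc, e1]
          _ ≤ 2 ^ (((n : ℝ) + 1) * a) *
                max (Real.log (4 + R')) (Real.log (4 + R) * Real.log (4 + R') / c n) := by
              refine mul_le_mul_of_nonneg_left
                (max_le_max (log_four_add_mono hR hle) (le_of_eq (by ring))) h0
          _ = _ := by rw [mul_assoc, e2]
      calc vpw c a R' * Real.log (4 + R)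
          ≤ (2 ^ (((n : ℝ) + 1) * a) * max 1 (Real.log (4 + R') / c n)) *
              Real.log (4 + R) := mul_le_mul_of_nonneg_right (vpw_le ha' n R') hlR.le
        _ ≤ _ := h1
    have h2 : vpw c a R' * Real.log (4 + R) / Real.log (4 + R') ≤ vpw c a R := by
      refine le_ciInf fun n => ?_
      rw [div_le_iff₀ hlR']
      exact key n
    show vpw c a R' / Real.log (4 + R') ≤ vpw c a R / Real.log (4 + R)
    rw [div_le_div_iff₀ hlR' hlR]
    exact (div_le_iff₀ hlR').1 h2

/-- Lemma 1.13 (a de la Vallée-Poussin type lemma for Besov norms). -/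
theorem vallee_poussin_besov
    (p r : ℝ≥0∞) (hp : 1 ≤ p) (hr : 1 ≤ r) (hr' : r ≠ ∞)
    (s : ℝ) (hs : 0 < s) (hs1 : s < 1)
    (f : ℝ → E2) (hper : Periodic f (2 * π)) (hmeas : Measurable f)
    (hf : besov s p r f < ∞) :
    ∃ μ : ℝ → ℝ, AdmissibleWeight μ ∧ besovW s p r μ f < ∞ := by
  classical
  -- exponent bookkeeping
  have hrr1 : (1 : ℝ) ≤ r.toReal := by
    have := ENNReal.toReal_mono hr' hr; simpa using this
  set rr : ℝ := r.toReal with hrrdef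
  have hrr0 : (0 : ℝ) < rr := lt_of_lt_of_le one_pos hrr1
  set a : ℝ := 1 / rr with hadef
  have ha0 : 0 < a := by positivity
  set G : ℝ → ℝ≥0∞ := fun β => (lpT p (dd β f) / ENNReal.ofReal (|β| ^ s)) ^ rr with hGdef
  have hbesov : besov s p r f = (∫⁻ β, G β ∂bmeas) ^ (1 / rr) := by
    simp [besov, besovW, eNorm, hr', hGdef, hrrdef]
  have hI : ∫⁻ β, G β ∂bmeas < ∞ := by
    rw [hbesov] at hf
    exact (ENNReal.rpow_lt_top_iff_of_pos (by positivity)).1 hf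
  -- basic null sets for `bmeas`
  have hSmeas : ∀ t : ℝ, MeasurableSet {β : ℝ | |β| ≤ t} := fun t =>
    (isClosed_le continuous_abs continuous_const).measurableSet
  have hbmeas_null : ∀ E : Set ℝ, MeasurableSet E → tmeas E = 0 → bmeas E = 0 := by
    intro E hE h0
    rw [bmeas, withDensity_apply _ hE]
    exact setLIntegral_measure_zero _ _ h0
  have h0null : bmeas ({0} : Set ℝ) = 0 := by
    refine hbmeas_null _ (measurableSet_singleton 0) ?_
    rw [tmeas, Measure.restrict_apply (measurableSet_singleton 0)]
    exact measure_mono_null inter_subset_left Real.volume_singleton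
  have hIocnull : bmeas ((Ioc (-π) π)ᶜ) = 0 := by
    refine hbmeas_null _ measurableSet_Ioc.compl ?_
    rw [tmeas, Measure.restrict_apply measurableSet_Ioc.compl, compl_inter_self]
    simp
  -- the finite measure with density `G`
  set νm : Measure ℝ := bmeas.withDensity G with hνmdef
  have hνuniv : νm univ = ∫⁻ β, G β ∂bmeas := by
    rw [hνmdef, withDensity_apply _ MeasurableSet.univ, Measure.restrict_univ]
  have hsmall : ∀ ε : ℝ≥0∞, 0 < ε → ∃ d : ℝ, 0 < d ∧ νm {β : ℝ | |β| ≤ d} ≤ ε := by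
    intro ε hε
    have hanti : Antitone fun k : ℕ => {β : ℝ | |β| ≤ 1 / ((k : ℝ) + 1)} := by
      intro k k' hk β hβ
      simp only [mem_setOf_eq] at *
      refine hβ.trans ?_
      gcongr
    have hfin : ∃ i : ℕ, νm {β : ℝ | |β| ≤ 1 / ((i : ℝ) + 1)} ≠ ∞ :=
      ⟨0, ((measure_mono (subset_univ _)).trans_lt (by rw [hνuniv]; exact hI)).ne⟩
    have hiInter : (⋂ k : ℕ, {β : ℝ | |β| ≤ 1 / ((k : ℝ) + 1)}) = {0} := by
      ext β
      simp only [mem_iInter, mem_setOf_eq, mem_singleton_iff]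
      constructor
      · intro h
        by_contra hβ
        obtain ⟨k, hk⟩ := exists_nat_one_div_lt (abs_pos.2 hβ)
        exact absurd (h k) (not_le.2 hk)
      · rintro rfl k
        simp only [abs_zero]
        positivity
    have htend := tendsto_measure_iInter_atTop (μ := νm)
      (fun k => (hSmeas _).nullMeasurableSet) hanti hfin
    rw [hiInter] at htend
    have h0 : νm ({0} : Set ℝ) = 0 := by
      rw [hνmdef, withDensity_apply _ (measurableSet_singleton 0)]
      exact setLIntegral_measure_zero _ _ h0null
    rw [h0] at htend
    obtain ⟨k, hk⟩ := (htend.eventually_lt_const hε).exists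
    exact ⟨1 / ((k : ℝ) + 1), by positivity, hk.le⟩
  -- recursive choice of the scales δ n
  have hstep : ∀ (n : ℕ) (d : ℝ), 0 < d → ∃ d' : ℝ, 0 < d' ∧ d' ≤ d / 2 ∧
      νm {β : ℝ | |β| ≤ d'} ≤ 4⁻¹ ^ (n + 1) := by
    intro n d hd
    have hεpos : (0 : ℝ≥0∞) < 4⁻¹ ^ (n + 1) :=
      ENNReal.pow_pos (ENNReal.inv_pos.2 (by norm_num)) _
    obtain ⟨e, he, hνe⟩ := hsmall _ hεpos
    refine ⟨min (d / 2) e, lt_min (by positivity) he, min_le_left _ _,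
      le_trans (measure_mono ?_) hνe⟩
    intro β hβ
    simp only [mem_setOf_eq] at hβ ⊢
    exact le_trans hβ (min_le_right _ _)
  choose F hF1 hF2 hF3 using hstep
  let Δ : ℕ → {x : ℝ // 0 < x} := fun n =>
    Nat.rec ⟨π, Real.pi_pos⟩ (fun m p => ⟨F m p.1 p.2, hF1 m p.1 p.2⟩) n
  set δ : ℕ → ℝ := fun n => (Δ n).1 with hδdef
  have hδpos : ∀ n, 0 < δ n := fun n => (Δ n).2
  have hδ0 : δ 0 = π := rfl
  have hδhalf : ∀ n, δ (n + 1) ≤ δ n / 2 := fun n => hF2 n (δ n) (hδpos n)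
  have hδν : ∀ n, νm {β : ℝ | |β| ≤ δ (n + 1)} ≤ 4⁻¹ ^ (n + 1) := fun n =>
    hF3 n (δ n) (hδpos n)
  have hδanti : Antitone δ := by
    refine antitone_nat_of_succ_le fun n => ?_
    have := hδhalf n
    have := hδpos n
    linarith
  have hδle : ∀ n, δ n ≤ π * (2⁻¹ : ℝ) ^ n := by
    intro n
    induction n with
    | zero => simp [hδ0]
    | succ m ih =>
        have h1 := hδhalf m
        have : π * (2⁻¹ : ℝ) ^ (m + 1) = (π * (2⁻¹ : ℝ) ^ m) / 2 := by ring
        rw [this]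
        linarith
  have hδsmallb : ∀ b : ℝ, 0 < b → ∃ n, δ n < b := by
    intro b hb
    obtain ⟨n, hn⟩ := exists_pow_lt_of_lt_one (div_pos hb Real.pi_pos)
      (by norm_num : (2⁻¹ : ℝ) < 1)
    refine ⟨n, lt_of_le_of_lt (hδle n) ?_⟩
    have := (lt_div_iff₀ Real.pi_pos).1 hn
    linarith
  -- the weight
  set c : ℕ → ℝ := fun n => Real.log (4 + (δ (n + 1))⁻¹) with hcdef
  have hcpos : ∀ n, 0 < c n := fun n =>
    log_four_add_pos (inv_nonneg.2 (hδpos (n + 1)).le)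
  have hcm : Monotone c := by
    intro m n hmn
    refine log_four_add_mono (inv_nonneg.2 (hδpos (m + 1)).le) ?_
    exact inv_anti₀ (hδpos (n + 1)) (hδanti (Nat.succ_le_succ hmn))
  refine ⟨vpw c a, vpw_admissible ha0 hcpos hcm, ?_⟩
  -- finiteness of the weighted norm
  set H : ℝ → ℝ≥0∞ := fun β =>
    (ENNReal.ofReal (vpw c a |β|⁻¹) * lpT p (dd β f) / ENNReal.ofReal (|β| ^ s)) ^ rr
    with hHdef
  have hbesovW : besovW s p r (vpw c a) f = (∫⁻ β, H β ∂bmeas) ^ (1 / rr) := by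
    simp [besovW, eNorm, hr', hHdef, hrrdef]
  -- annuli
  set A : ℕ → Set ℝ := fun n => {β : ℝ | δ (n + 1) < |β| ∧ |β| ≤ δ n} with hAdef
  have hAmeas : ∀ n, MeasurableSet (A n) := by
    intro n
    have : A n = {β : ℝ | δ (n + 1) < |β|} ∩ {β : ℝ | |β| ≤ δ n} := rfl
    rw [this]
    exact ((isOpen_lt continuous_const continuous_abs).measurableSet).inter (hSmeas _)
  have hU : MeasurableSet (⋃ n, A n) := MeasurableSet.iUnion hAmeas
  have hUc : bmeas (⋃ n, A n)ᶜ = 0 := by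
    refine measure_mono_null ?_ (measure_union_null h0null hIocnull)
    intro β hβ
    simp only [mem_compl_iff, mem_iUnion, not_exists] at hβ
    by_contra hmem
    simp only [mem_union, mem_singleton_iff, mem_compl_iff, not_or, not_not] at hmem
    obtain ⟨hβ0, hβIoc⟩ := hmem
    have habs0 : 0 < |β| := abs_pos.2 hβ0
    have habsπ : |β| ≤ π := abs_le.2 ⟨le_of_lt hβIoc.1, hβIoc.2⟩
    have hex : ∃ n, δ n < |β| := hδsmallb |β| habs0
    have hspec := Nat.find_spec hex
    rcases Nat.eq_zero_or_pos (Nat.find hex) with h0 | hpos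
    · rw [h0, hδ0] at hspec
      linarith
    · obtain ⟨m, hm⟩ := Nat.exists_eq_succ_of_ne_zero hpos.ne'
      refine hβ m ⟨?_, ?_⟩
      · rw [show m + 1 = Nat.find hex from hm.symm]; exact hspec
      · exact not_lt.1 (Nat.find_min hex (by omega))
  -- integral bound on each annulus
  have hνbound : ∀ n : ℕ, ∫⁻ β in A n, G β ∂bmeas ≤
      (∫⁻ β, G β ∂bmeas + 1) * 4⁻¹ ^ n := by
    intro n
    have h1 : ∫⁻ β in A n, G β ∂bmeas ≤ νm {β : ℝ | |β| ≤ δ n} := by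
      rw [hνmdef, withDensity_apply _ (hSmeas _)]
      exact lintegral_mono_set fun β hβ => hβ.2
    cases n with
    | zero =>
        rw [pow_zero, mul_one]
        refine h1.trans (le_trans (measure_mono (subset_univ _)) ?_)
        rw [hνuniv]
        exact le_self_add
    | succ m =>
        refine h1.trans ((hδν m).trans ?_)
        exact le_mul_of_one_le_left zero_le le_add_self
  -- the pointwise bound on each annulus
  have hpt : ∀ n : ℕ, ∀ β ∈ A n,
      H β ≤ ENNReal.ofReal ((2 : ℝ) ^ ((n : ℝ) + 1)) * G β := by
    intro n β hβ
    obtain ⟨hβ1, hβ2⟩ := hβ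
    have hβpos : 0 < |β| := lt_trans (hδpos (n + 1)) hβ1
    have hinv : |β|⁻¹ ≤ (δ (n + 1))⁻¹ := inv_anti₀ (hδpos (n + 1)) hβ1.le
    have hμb : vpw c a |β|⁻¹ ≤ 2 ^ (((n : ℝ) + 1) * a) :=
      vpw_le_of_log_le ha0.le hcpos n
        (log_four_add_mono (inv_nonneg.2 hβpos.le) hinv)
    have hpow : ((2 : ℝ) ^ (((n : ℝ) + 1) * a)) ^ rr = (2 : ℝ) ^ ((n : ℝ) + 1) := by
      rw [← Real.rpow_mul (by norm_num : (0:ℝ) ≤ 2)]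
      congr 1
      rw [hadef]
      field_simp
    calc H β = (ENNReal.ofReal (vpw c a |β|⁻¹) *
          (lpT p (dd β f) / ENNReal.ofReal (|β| ^ s))) ^ rr := by
          rw [hHdef]; simp only [mul_div_assoc]
      _ = ENNReal.ofReal (vpw c a |β|⁻¹) ^ rr *
          (lpT p (dd β f) / ENNReal.ofReal (|β| ^ s)) ^ rr :=
          ENNReal.mul_rpow_of_nonneg _ _ hrr0.le
      _ ≤ ENNReal.ofReal ((2 : ℝ) ^ (((n : ℝ) + 1) * a)) ^ rr * G β := by
          rw [hGdef]
          exact mul_le_mul_left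
            (ENNReal.rpow_le_rpow (ENNReal.ofReal_le_ofReal hμb) hrr0.le) _
      _ = ENNReal.ofReal ((2 : ℝ) ^ ((n : ℝ) + 1)) * G β := by
          rw [ENNReal.ofReal_rpow_of_pos (by positivity), hpow]
  -- summing up
  have hHfin : ∫⁻ β, H β ∂bmeas < ∞ := by
    have hsplit : ∫⁻ β, H β ∂bmeas = ∫⁻ β in ⋃ n, A n, H β ∂bmeas := by
      rw [← lintegral_add_compl H hU, setLIntegral_measure_zero _ _ hUc, add_zero]
    rw [hsplit]
    have h2 : ∫⁻ β in ⋃ n, A n, H β ∂bmeas ≤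
        ∑' n : ℕ, ENNReal.ofReal ((2 : ℝ) ^ ((n : ℝ) + 1)) *
          ((∫⁻ β, G β ∂bmeas + 1) * 4⁻¹ ^ n) := by
      refine le_trans (lintegral_iUnion_le _ _) (ENNReal.tsum_le_tsum fun n => ?_)
      calc ∫⁻ β in A n, H β ∂bmeas
          ≤ ∫⁻ β in A n, ENNReal.ofReal ((2 : ℝ) ^ ((n : ℝ) + 1)) * G β ∂bmeas :=
            setLIntegral_mono' (hAmeas n) (hpt n)
        _ = ENNReal.ofReal ((2 : ℝ) ^ ((n : ℝ) + 1)) * ∫⁻ β in A n, G β ∂bmeas :=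
            lintegral_const_mul' _ _ ENNReal.ofReal_ne_top
        _ ≤ _ := mul_le_mul_right (hνbound n) _
    refine lt_of_le_of_lt h2 ?_
    set I1 : ℝ≥0∞ := ∫⁻ β, G β ∂bmeas + 1 with hI1def
    have hI1ne : I1 ≠ ∞ := ENNReal.add_ne_top.2 ⟨hI.ne, ENNReal.one_ne_top⟩
    have hterm : ∀ n : ℕ, ENNReal.ofReal ((2 : ℝ) ^ ((n : ℝ) + 1)) * (I1 * 4⁻¹ ^ n) ≤
        (2 * I1) * 2⁻¹ ^ n := by
      intro n
      have hofReal : ENNReal.ofReal ((2 : ℝ) ^ ((n : ℝ) + 1)) = 2 ^ (n + 1) := by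
        rw [show ((n : ℝ) + 1) = ((n + 1 : ℕ) : ℝ) by push_cast; ring,
          Real.rpow_natCast, ENNReal.ofReal_pow (by norm_num), ENNReal.ofReal_ofNat]
      have h24 : (2 : ℝ≥0∞) ^ n * 4⁻¹ ^ n = 2⁻¹ ^ n := by
        rw [← mul_pow]
        congr 1
        rw [show (4 : ℝ≥0∞) = 2 * 2 by norm_num,
          ENNReal.mul_inv (Or.inl two_ne_zero) (Or.inl ENNReal.ofNat_ne_top),
          ← mul_assoc, ENNReal.mul_inv_cancel two_ne_zero ENNReal.ofNat_ne_top, one_mul]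
      calc ENNReal.ofReal ((2 : ℝ) ^ ((n : ℝ) + 1)) * (I1 * 4⁻¹ ^ n)
          = (2 * I1) * ((2 : ℝ≥0∞) ^ n * 4⁻¹ ^ n) := by rw [hofReal]; ring
        _ ≤ (2 * I1) * 2⁻¹ ^ n := le_of_eq (by rw [h24])
    calc ∑' n : ℕ, ENNReal.ofReal ((2 : ℝ) ^ ((n : ℝ) + 1)) * (I1 * 4⁻¹ ^ n)
        ≤ ∑' n : ℕ, (2 * I1) * 2⁻¹ ^ n := ENNReal.tsum_le_tsum hterm
      _ = (2 * I1) * ∑' n : ℕ, (2⁻¹ : ℝ≥0∞) ^ n := ENNReal.tsum_mul_left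
      _ = (2 * I1) * 2 := by
          rw [ENNReal.tsum_geometric, ENNReal.one_sub_inv_two, inv_inv]
      _ < ∞ := ENNReal.mul_lt_top
          (ENNReal.mul_lt_top (by norm_num) hI1ne.lt_top) (by norm_num)
  rw [hbesovW]
  exact ENNReal.rpow_lt_top_of_nonneg (by positivity) hHfin.ne

end Peskin
end
end

section
/- Bounds for the averaged difference operators (Lemma 3.2): Let f : 𝕋 → ℝ² be continuously differentiable with derivative f', and for α ∈ [-π,π], α ≠ 0, define δ_α^+ f'(θ) := f'(θ+α) − D_α f(θ) and δ_α^- f'(θ) := f'(θ) − D_α f(θ). Then: (i) for every p ∈ [1,∞] and every α ≠ 0, ‖δ_α^- f'‖_{L^p(𝕋)} ≤ 2 ‖f'‖_{L^p(𝕋)}, ‖δ_α^+ f'‖_{L^p(𝕋)} ≤ 4 ‖f'‖_{L^p(𝕋)}, and ‖D_α f‖_{L^p(𝕋)} ≤ ‖f'‖_{L^p(𝕋)}; (ii) for every 0 < s < 1 and p, q ∈ [1,∞] there exists C = C(s,q) such that ( ∫_{[-π,π]} ‖δ_β^± f'‖_{L^p(𝕋)}^q |β|^{-1-sq} dβ )^{1/q}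 ≤ C ‖f'‖_{Ḃ^s_{p,q}} (with the essential supremum modification when q = ∞), where the estimate holds for both choices of sign. -/
open MeasureTheory Real Set Filter Function
open scoped ENNReal NNReal Topology

noncomputable section

namespace Peskin

-- ## basic facts

lemma twopi_pos : (0:ℝ) < 2 * π := by positivity

lemma tmeas_univ : tmeas univ = ENNReal.ofReal (2 * π) := by
  rw [tmeas, Measure.restrict_apply_univ, Real.volume_Ioc]
  congr 1; ring

instance : IsFiniteMeasure tmeas := by
  constructor; rw [tmeas_univ]; exact ENNReal.ofReal_lt_top

lemma lintegral_tmeas_translate {h : ℝ → ℝ≥0∞} (hm : Measurable h)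
    (hper : Periodic h (2 * π)) (a : ℝ) :
    ∫⁻ θ, h (θ + a) ∂tmeas = ∫⁻ θ, h θ ∂tmeas := by
  have hmem : ∀ θ : ℝ, θ + a ∈ Ioc (-π + a) (π + a) ↔ θ ∈ Ioc (-π) π := by
    intro θ; simp [mem_Ioc]
  have key : ∀ θ : ℝ, (Ioc (-π + a) (π + a)).indicator h (θ + a)
      = (Ioc (-π) π).indicator (fun θ => h (θ + a)) θ := by
    intro θ
    by_cases hθ : θ ∈ Ioc (-π) π
    · rw [indicator_of_mem ((hmem θ).2 hθ), indicator_of_mem hθ]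
    · rw [indicator_of_notMem (fun hc => hθ ((hmem θ).1 hc)), indicator_of_notMem hθ]
  have hinv : ∀ (g : AddSubgroup.zmultiples (2 * π)) (x : ℝ), h (g +ᵥ x) = h x := by
    rintro ⟨g, hg⟩ x
    obtain ⟨k, rfl⟩ := hg
    have : Periodic h ((k : ℤ) • (2 * π)) := hper.zsmul k
    show h (k • (2 * π) + x) = h x
    rw [add_comm]; exact this x
  have h1 : IsAddFundamentalDomain (AddSubgroup.zmultiples (2 * π))
      (Ioc (-π + a) ((-π + a) + 2 * π)) volume := isAddFundamentalDomain_Ioc twopi_pos _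
  have h2 : IsAddFundamentalDomain (AddSubgroup.zmultiples (2 * π))
      (Ioc (-π) (-π + 2 * π)) volume := isAddFundamentalDomain_Ioc twopi_pos _
  have hfd := h1.setLIntegral_eq h2 h hinv
  calc ∫⁻ θ, h (θ + a) ∂tmeas
      = ∫⁻ θ, (Ioc (-π) π).indicator (fun θ => h (θ + a)) θ := by
        rw [tmeas, ← lintegral_indicator]; exact measurableSet_Ioc
    _ = ∫⁻ θ, (Ioc (-π + a) (π + a)).indicator h (θ + a) := by simp_rw [key]
    _ = ∫⁻ θ, (Ioc (-π + a) (π + a)).indicator h θ := by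
        exact lintegral_add_right_eq_self _ a
    _ = ∫⁻ θ in Ioc (-π + a) (π + a), h θ := by
        rw [lintegral_indicator]; exact measurableSet_Ioc
    _ = ∫⁻ θ in Ioc (-π) π, h θ := by
        rw [show π + a = (-π + a) + 2 * π by ring, hfd,
          show -π + 2 * π = π by ring]
    _ = ∫⁻ θ, h θ ∂tmeas := rfl


lemma iSup_eq_iSup_rat {F : ℝ → ℝ≥0∞} (hF : Continuous F) :
    ⨆ θ : ℝ, F θ = ⨆ q : ℚ, F (q : ℝ) := by
  refine le_antisymm (iSup_le fun θ => ?_) (iSup_le fun q => le_iSup F (q : ℝ) |>.trans le_rfl)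
  obtain ⟨u, hu, hlim⟩ : ∃ u : ℕ → ℚ, True ∧ Tendsto (fun n => ((u n : ℝ))) atTop (𝓝 θ) := by
    have : ∀ n : ℕ, ∃ q : ℚ, |θ - (q:ℝ)| < 1 / (n + 1) := by
      intro n
      obtain ⟨q, hq1, hq2⟩ := exists_rat_btwn (show θ - 1/(n+1) < θ by
        have h9 : (0:ℝ) < 1/((n:ℝ)+1) := by positivity
        linarith)
      exact ⟨q, by rw [abs_lt]; constructor <;> linarith⟩
    choose u hu using this
    refine ⟨u, trivial, ?_⟩
    rw [tendsto_iff_dist_tendsto_zero]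
    apply squeeze_zero (fun n => dist_nonneg) (fun n => ?_) tendsto_one_div_add_atTop_nhds_zero_nat
    rw [dist_comm, Real.dist_eq]; exact (hu n).le
  have : Tendsto (fun n => F (u n)) atTop (𝓝 (F θ)) := (hF.tendsto θ).comp hlim
  exact le_of_tendsto this (Eventually.of_forall fun n => le_iSup (fun q : ℚ => F (q:ℝ)) (u n))

lemma eLpNormEssSup_periodic {g : ℝ → E2} (hg : Continuous g) (hper : Periodic g (2 * π)) :
    eLpNormEssSup g tmeas = ⨆ θ : ℝ, (‖g θ‖₊ : ℝ≥0∞) := by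
  rw [eLpNormEssSup]
  refine le_antisymm (essSup_le_of_ae_le _ (ae_of_all _ fun θ => le_iSup (fun θ => (‖g θ‖₊ : ℝ≥0∞)) θ)) (iSup_le fun θ₀ => ?_)
  -- move θ₀ into (-π, π]
  obtain ⟨n, hn, -⟩ := existsUnique_add_zsmul_mem_Ioc twopi_pos θ₀ (-π)
  rw [show -π + 2 * π = π by ring] at hn
  set θ₁ := θ₀ + n • (2 * π) with hθ₁
  have hval : g θ₁ = g θ₀ := by
    rw [hθ₁, zsmul_eq_mul]
    exact (hper.int_mul n) θ₀
  rw [← hval]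
  by_contra hcon
  push_neg at hcon
  obtain ⟨c, hc1, hc2⟩ := exists_between hcon
  set F : ℝ → ℝ≥0∞ := fun θ => (‖g θ‖₊ : ℝ≥0∞) with hF
  have hFc : Continuous F := ENNReal.continuous_coe.comp hg.nnnorm
  have hU : IsOpen {θ | c < F θ} := isOpen_lt continuous_const hFc
  have hmem : θ₁ ∈ {θ | c < F θ} := hc2
  obtain ⟨δ, hδ, hball⟩ := Metric.isOpen_iff.1 hU θ₁ hmem
  have hnull : tmeas {θ | essSup F tmeas < F θ} = 0 := meas_essSup_lt
  have hsub : {θ | c < F θ} ⊆ {θ | essSup F tmeas < F θ} := fun θ hθ => lt_of_le_of_lt hc1.le hθ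
  have hnull2 : tmeas {θ | c < F θ} = 0 := measure_mono_null hsub hnull
  -- but the set contains an interval of positive tmeas-measure
  set l := max (-π) (θ₁ - δ) with hl
  have hlt : l < θ₁ := by
    rcases hn with ⟨h1, h2⟩
    apply max_lt h1 (by linarith)
  have hIoo : Ioo l θ₁ ⊆ {θ | c < F θ} ∩ Ioc (-π) π := by
    intro x hx
    rcases hx with ⟨hx1, hx2⟩
    have hx3 : -π < x := lt_of_le_of_lt (le_max_left _ _) hx1
    have hx4 : θ₁ - δ < x := lt_of_le_of_lt (le_max_right _ _) hx1
    refine ⟨hball ?_, hx3, le_trans hx2.le hn.2⟩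
    rw [Metric.mem_ball, Real.dist_eq, abs_lt]
    constructor <;> linarith
  have : tmeas (Ioo l θ₁) = 0 := by
    refine measure_mono_null ?_ hnull2
    intro x hx; exact (hIoo hx).1
  rw [tmeas, Measure.restrict_apply' measurableSet_Ioc,
    inter_eq_self_of_subset_left (fun x hx => (hIoo hx).2), Real.volume_Ioo] at this
  exact absurd this (by simp [ENNReal.ofReal_eq_zero]; linarith)


lemma periodic_translate {E : Type*} {g : ℝ → E} (hper : Periodic g (2 * π)) (a : ℝ) :
    Periodic (fun θ => g (θ + a)) (2 * π) := by
  intro x; simp only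
  rw [show x + 2 * π + a = (x + a) + 2 * π by ring]
  exact hper _

lemma periodic_nnnorm_rpow {E : Type*} [NormedAddCommGroup E] {g : ℝ → E}
    (hper : Periodic g (2 * π)) (c : ℝ) :
    Periodic (fun θ => (‖g θ‖₊ : ℝ≥0∞) ^ c) (2 * π) := by
  intro x; simp only [hper x]

lemma meas_nnnorm_rpow {E : Type*} [NormedAddCommGroup E] {g : ℝ → E}
    (hg : Continuous g) (c : ℝ) : Measurable fun θ => (‖g θ‖₊ : ℝ≥0∞) ^ c :=
  (ENNReal.continuous_rpow_const.comp (ENNReal.continuous_coe.comp hg.nnnorm)).measurable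

lemma lpT_translate {g : ℝ → E2} (hg : Continuous g) (hper : Periodic g (2 * π))
    (p : ℝ≥0∞) (a : ℝ) : lpT p (fun θ => g (θ + a)) = lpT p g := by
  rcases eq_or_ne p 0 with rfl | hp0
  · simp [lpT]
  rcases eq_or_ne p ∞ with rfl | hptop
  · rw [lpT, lpT, eLpNorm_exponent_top, eLpNorm_exponent_top,
      eLpNormEssSup_periodic (show Continuous fun θ : ℝ => g (θ + a) by fun_prop)
        (periodic_translate hper a),
      eLpNormEssSup_periodic hg hper]
    exact Function.Surjective.iSup_comp (f := fun θ : ℝ => θ + a)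
      (fun b => ⟨b - a, by ring⟩) (fun θ => (‖g θ‖₊ : ℝ≥0∞))
  · rw [lpT, lpT, eLpNorm_eq_lintegral_rpow_enorm_toReal hp0 hptop,
      eLpNorm_eq_lintegral_rpow_enorm_toReal hp0 hptop]
    congr 1
    exact lintegral_tmeas_translate (meas_nnnorm_rpow hg _) (periodic_nnnorm_rpow hper _) a

lemma lintegral_rpow_le {μ : Measure ℝ} [IsProbabilityMeasure μ] {F : ℝ → ℝ≥0∞}
    (hF : AEMeasurable F μ) {c : ℝ} (hc : 1 ≤ c) :
    (∫⁻ t, F t ∂μ) ^ c ≤ ∫⁻ t, F t ^ c ∂μ := by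
  rcases eq_or_lt_of_le hc with rfl | hlt
  · simp
  have hc0 : 0 < c := lt_trans one_pos hlt
  have hpq : c.HolderConjugate (Real.conjExponent c) := Real.HolderConjugate.conjExponent hlt
  have h := ENNReal.lintegral_mul_le_Lp_mul_Lq μ hpq hF aemeasurable_const (g := fun _ => 1)
  simp only [Pi.mul_apply, mul_one, ENNReal.one_rpow, lintegral_const, measure_univ, one_mul] at h
  have h2 : (∫⁻ t, F t ∂μ) ^ c ≤ ((∫⁻ t, F t ^ c ∂μ) ^ (1 / c)) ^ c :=
    ENNReal.rpow_le_rpow h hc0.le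
  rwa [← ENNReal.rpow_mul, one_div_mul_cancel hc0.ne', ENNReal.rpow_one] at h2

lemma lpT_avg {g : ℝ → E2} (hg : Continuous g) (hper : Periodic g (2 * π)) (α : ℝ)
    {p : ℝ≥0∞} (hp : 1 ≤ p) :
    lpT p (fun θ => ∫ t in (0:ℝ)..1, g (θ + t * α)) ≤ lpT p g := by
  have hp0 : p ≠ 0 := fun h => by simp [h] at hp
  have hprob : IsProbabilityMeasure (volume.restrict (Ioc (0:ℝ) 1)) := by
    constructor
    rw [Measure.restrict_apply_univ, Real.volume_Ioc]
    norm_num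
  rcases eq_or_ne p ∞ with rfl | hptop
  · rw [lpT, lpT, eLpNorm_exponent_top, eLpNorm_exponent_top,
      eLpNormEssSup_periodic hg hper, eLpNormEssSup]
    refine essSup_le_of_ae_le _ (ae_of_all _ fun θ => ?_)
    calc (‖∫ t in (0:ℝ)..1, g (θ + t * α)‖₊ : ℝ≥0∞)
        = ‖∫ t in Ioc (0:ℝ) 1, g (θ + t * α) ∂volume‖₊ := by
          rw [intervalIntegral.integral_of_le zero_le_one]
      _ ≤ ∫⁻ t in Ioc (0:ℝ) 1, ‖g (θ + t * α)‖₊ := enorm_integral_le_lintegral_enorm _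
      _ ≤ ∫⁻ _ in Ioc (0:ℝ) 1, ⨆ x : ℝ, (‖g x‖₊ : ℝ≥0∞) :=
          lintegral_mono fun t => le_iSup (fun x => (‖g x‖₊ : ℝ≥0∞)) (θ + t * α)
      _ = ⨆ x : ℝ, (‖g x‖₊ : ℝ≥0∞) := by
          rw [lintegral_const, measure_univ, mul_one]
  · set c := p.toReal with hcdef
    have hc1 : 1 ≤ c := by
      rw [hcdef, ← ENNReal.toReal_one]
      exact ENNReal.toReal_mono hptop hp
    have hc0 : (0:ℝ) < c := lt_of_lt_of_le one_pos hc1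
    rw [lpT, lpT, eLpNorm_eq_lintegral_rpow_enorm_toReal hp0 hptop,
      eLpNorm_eq_lintegral_rpow_enorm_toReal hp0 hptop]
    apply ENNReal.rpow_le_rpow _ (by positivity : (0:ℝ) ≤ 1 / p.toReal)
    have hcont2 : Continuous fun q : ℝ × ℝ => (‖g (q.1 + q.2 * α)‖₊ : ℝ≥0∞) ^ c :=
      ENNReal.continuous_rpow_const.comp (ENNReal.continuous_coe.comp
        (hg.comp (continuous_fst.add (continuous_snd.mul continuous_const))).nnnorm)
    calc ∫⁻ θ, (‖∫ t in (0:ℝ)..1, g (θ + t * α)‖₊ : ℝ≥0∞) ^ c ∂tmeas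
        ≤ ∫⁻ θ, (∫⁻ t, (‖g (θ + t * α)‖₊ : ℝ≥0∞) ^ c ∂(volume.restrict (Ioc (0:ℝ) 1))) ∂tmeas := by
          apply lintegral_mono fun θ => ?_
          have h1 : (‖∫ t in (0:ℝ)..1, g (θ + t * α)‖₊ : ℝ≥0∞)
              ≤ ∫⁻ t, (‖g (θ + t * α)‖₊ : ℝ≥0∞) ∂(volume.restrict (Ioc (0:ℝ) 1)) := by
            rw [intervalIntegral.integral_of_le zero_le_one]
            exact enorm_integral_le_lintegral_enorm _
          calc (‖∫ t in (0:ℝ)..1, g (θ + t * α)‖₊ : ℝ≥0∞) ^ c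
              ≤ (∫⁻ t, (‖g (θ + t * α)‖₊ : ℝ≥0∞) ∂(volume.restrict (Ioc (0:ℝ) 1))) ^ c :=
                ENNReal.rpow_le_rpow h1 hc0.le
            _ ≤ ∫⁻ t, (‖g (θ + t * α)‖₊ : ℝ≥0∞) ^ c ∂(volume.restrict (Ioc (0:ℝ) 1)) :=
                lintegral_rpow_le (Continuous.aemeasurable (by fun_prop)) hc1
      _ = ∫⁻ t, (∫⁻ θ, (‖g (θ + t * α)‖₊ : ℝ≥0∞) ^ c ∂tmeas) ∂(volume.restrict (Ioc (0:ℝ) 1)) :=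
          lintegral_lintegral_swap hcont2.measurable.aemeasurable
      _ = ∫⁻ _t, (∫⁻ θ, (‖g θ‖₊ : ℝ≥0∞) ^ c ∂tmeas) ∂(volume.restrict (Ioc (0:ℝ) 1)) := by
          apply lintegral_congr fun t => ?_
          exact lintegral_tmeas_translate (meas_nnnorm_rpow hg _) (periodic_nnnorm_rpow hper _) (t * α)
      _ = ∫⁻ θ, (‖g θ‖₊ : ℝ≥0∞) ^ c ∂tmeas := by
          rw [lintegral_const, measure_univ, mul_one]


lemma Dd_eq_integral {f : ℝ → E2} (hf : ContDiff ℝ 1 f) {α : ℝ} (hα : α ≠ 0) (θ : ℝ) :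
    Dd α f θ = ∫ t in (0:ℝ)..1, deriv f (θ + t * α) := by
  have hd : Differentiable ℝ f := hf.differentiable one_ne_zero
  have hc : Continuous (deriv f) := hf.continuous_deriv le_rfl
  rw [intervalIntegral.integral_comp_mul_right (fun u => deriv f (θ + u)) hα,
    intervalIntegral.integral_comp_add_left (fun u => deriv f u) θ,
    intervalIntegral.integral_deriv_eq_sub (fun x _ => hd x)
      ((hc.intervalIntegrable _ _))]
  simp only [Dd, one_mul, zero_mul, add_zero]

lemma deriv_periodic {f : ℝ → E2} (hper : Periodic f (2 * π)) :
    Periodic (deriv f) (2 * π) := by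
  intro x
  rw [← deriv_comp_add_const f (2 * π) x]
  congr 1
  funext y
  exact hper y

lemma dd_deriv_periodic {f : ℝ → E2} (hper : Periodic f (2 * π)) (h : ℝ) :
    Periodic (dd h (deriv f)) (2 * π) := by
  have hder : Periodic (deriv f) (2 * π) := deriv_periodic hper
  intro x
  simp only [dd]
  rw [show x + 2 * π + h = (x + h) + 2 * π by ring, hder, hder]

lemma dd_deriv_continuous {f : ℝ → E2} (hf : ContDiff ℝ 1 f) (h : ℝ) :
    Continuous (dd h (deriv f)) := by
  have hc : Continuous (deriv f) := hf.continuous_deriv le_rfl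
  unfold dd; fun_prop

lemma Dd_sub_two {f : ℝ → E2} (hf : ContDiff ℝ 1 f) {h : ℝ} (hh : h ≠ 0) :
    (fun θ => Dd h f θ - Dd (2 * h) f θ)
      = (2:ℝ)⁻¹ • ((-(1:ℝ)) • fun θ => ∫ t in (0:ℝ)..1, dd h (deriv f) (θ + t * h)) := by
  have hc : Continuous (deriv f) := hf.continuous_deriv le_rfl
  funext θ
  have e1 : Dd h f (θ + h) - Dd h f θ = ∫ t in (0:ℝ)..1, dd h (deriv f) (θ + t * h) := by
    rw [Dd_eq_integral hf hh, Dd_eq_integral hf hh,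
      ← intervalIntegral.integral_sub
        (Continuous.intervalIntegrable (by fun_prop : Continuous fun t : ℝ => deriv f (θ + h + t * h)) 0 1)
        (Continuous.intervalIntegrable (by fun_prop : Continuous fun t : ℝ => deriv f (θ + t * h)) 0 1)]
    apply intervalIntegral.integral_congr
    intro t _
    simp only [dd]
    congr 2 <;> ring
  have e2 : Dd h f θ - Dd (2 * h) f θ = (2:ℝ)⁻¹ • (Dd h f θ - Dd h f (θ + h)) := by
    unfold Dd
    rw [show θ + 2 * h = θ + h + h by ring]
    match_scalars <;> field_simp <;> ring
  rw [e2]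
  simp only [Pi.smul_apply]
  rw [← e1]
  simp only [neg_one_smul, smul_neg, neg_sub]

lemma lpT_Dd_sub {f : ℝ → E2} (hf : ContDiff ℝ 1 f) (hper : Periodic f (2 * π))
    {h : ℝ} (hh : h ≠ 0) {p : ℝ≥0∞} (hp : 1 ≤ p) :
    lpT p (fun θ => Dd h f θ - Dd (2 * h) f θ)
      ≤ 2⁻¹ * lpT p (dd h (deriv f)) := by
  rw [lpT, Dd_sub_two hf hh, eLpNorm_const_smul, eLpNorm_const_smul]
  have h1 : (‖(2:ℝ)⁻¹‖₊ : ℝ≥0∞) = 2⁻¹ := by simp [nnnorm_inv]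
  have h2 : (‖(-1:ℝ)‖₊ : ℝ≥0∞) = 1 := by simp
  rw [enorm_eq_nnnorm, enorm_eq_nnnorm, h1, h2, one_mul]
  exact mul_le_mul_right (lpT_avg (dd_deriv_continuous hf h) (dd_deriv_periodic hper h) h hp) _

lemma remainder_small {f : ℝ → E2} (hf : ContDiff ℝ 1 f) {β : ℝ} (hβ : β ≠ 0)
    {δ : ℝ} (hδ : 0 < δ) :
    ∃ N : ℕ, ∀ θ ∈ Ioc (-π) π, ‖deriv f θ - Dd (β / 2 ^ N) f θ‖ ≤ δ := by
  have hc : Continuous (deriv f) := hf.continuous_deriv le_rfl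
  set K := Icc (-π - |β|) (π + |β|) with hK
  have hKc : IsCompact K := isCompact_Icc
  have hUC := hKc.uniformContinuousOn_of_continuous hc.continuousOn
  obtain ⟨d, hd, hdd⟩ := Metric.uniformContinuousOn_iff.1 hUC δ hδ
  obtain ⟨N, hN⟩ := pow_unbounded_of_one_lt (|β| / d) (by norm_num : (1:ℝ) < 2)
  refine ⟨N, fun θ hθ => ?_⟩
  set h := β / 2 ^ N with hhdef
  have h2N : (0:ℝ) < 2 ^ N := by positivity
  have hh0 : h ≠ 0 := div_ne_zero hβ (by positivity)
  have habs : |h| < d := by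
    rw [hhdef, abs_div, abs_of_pos h2N, div_lt_iff₀ h2N]
    calc |β| = (|β| / d) * d := by field_simp
      _ < 2 ^ N * d := by exact mul_lt_mul_of_pos_right hN hd
      _ = d * 2 ^ N := by ring
  have habsβ : |h| ≤ |β| := by
    rw [hhdef, abs_div, abs_of_pos h2N]
    apply div_le_self (abs_nonneg β)
    exact one_le_pow₀ (by norm_num)
  have heq : deriv f θ - Dd h f θ = ∫ t in (0:ℝ)..1, (deriv f θ - deriv f (θ + t * h)) := by
    rw [intervalIntegral.integral_sub
      (intervalIntegrable_const : IntervalIntegrable (fun _ : ℝ => deriv f θ) volume 0 1)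
      (Continuous.intervalIntegrable (by fun_prop : Continuous fun t : ℝ => deriv f (θ + t * h)) 0 1),
      Dd_eq_integral hf hh0]
    simp
  rw [heq]
  have hbound : ∀ t ∈ Set.uIoc (0:ℝ) 1, ‖deriv f θ - deriv f (θ + t * h)‖ ≤ δ := by
    intro t ht
    rw [Set.uIoc_of_le zero_le_one] at ht
    have hθK : θ ∈ K := by
      constructor
      · have := hθ.1; have := abs_nonneg β; linarith
      · have := hθ.2; have := abs_nonneg β; linarith
    have hth0 : |t * h| ≤ |h| := by
      rw [abs_mul]
      nth_rewrite 2 [← one_mul |h|]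
      apply mul_le_mul_of_nonneg_right _ (abs_nonneg h)
      rw [abs_of_pos ht.1]; exact ht.2
    have hth : |t * h| ≤ |β| := hth0.trans habsβ
    have hθtK : θ + t * h ∈ K := by
      have h1 := abs_le.1 hth
      constructor
      · have := hθ.1; linarith [h1.1]
      · have := hθ.2; linarith [h1.2]
    have hdist : dist θ (θ + t * h) < d := by
      rw [Real.dist_eq, abs_sub_comm]
      have : θ + t * h - θ = t * h := by ring
      rw [this]
      exact hth0.trans_lt habs
    have := hdd θ hθK (θ + t * h) hθtK hdist
    rw [dist_eq_norm] at this
    exact this.le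
  calc ‖∫ t in (0:ℝ)..1, (deriv f θ - deriv f (θ + t * h))‖
      ≤ δ * |1 - 0| := intervalIntegral.norm_integral_le_of_norm_le_const hbound
    _ = δ := by simp


lemma Dd_continuous {f : ℝ → E2} (hf : Continuous f) (α : ℝ) : Continuous (Dd α f) := by
  unfold Dd; fun_prop

lemma key_dyadic {f : ℝ → E2} (hf : ContDiff ℝ 1 f) (hper : Periodic f (2 * π))
    {p : ℝ≥0∞} (hp : 1 ≤ p) {β : ℝ} (hβ : β ≠ 0) :
    lpT p (fun θ => deriv f θ - Dd β f θ)
      ≤ ∑' n : ℕ, 2⁻¹ * lpT p (dd (β / 2 ^ (n + 1)) (deriv f)) := by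
  have hcf : Continuous f := hf.continuous
  have hc : Continuous (deriv f) := hf.continuous_deriv le_rfl
  set S := ∑' n : ℕ, 2⁻¹ * lpT p (dd (β / 2 ^ (n + 1)) (deriv f)) with hS
  refine ENNReal.le_of_forall_pos_le_add fun ε hε _ => ?_
  have hε8 : (0:ℝ) < (ε:ℝ) / 8 := by positivity
  obtain ⟨N, hN⟩ := remainder_small hf hβ hε8
  have hdecomp : (fun θ => deriv f θ - Dd β f θ)
      = (fun θ => deriv f θ - Dd (β / 2 ^ N) f θ)
        + ∑ n ∈ Finset.range N, (fun θ => Dd (β / 2 ^ (n + 1)) f θ - Dd (β / 2 ^ n) f θ) := by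
    funext θ
    simp only [Pi.add_apply, Finset.sum_apply]
    rw [Finset.sum_range_sub (fun n => Dd (β / 2 ^ n) f θ)]
    have h0 : β / 2 ^ 0 = β := by norm_num
    rw [h0]
    abel
  have hAESM : ∀ γ : ℝ, AEStronglyMeasurable (fun θ => Dd γ f θ) tmeas :=
    fun γ => (Dd_continuous hcf γ).aestronglyMeasurable
  have hstep : lpT p (fun θ => deriv f θ - Dd β f θ)
      ≤ lpT p (fun θ => deriv f θ - Dd (β / 2 ^ N) f θ)
        + ∑ n ∈ Finset.range N, lpT p (fun θ => Dd (β / 2 ^ (n + 1)) f θ - Dd (β / 2 ^ n) f θ) := by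
    rw [lpT, hdecomp]
    refine le_trans (eLpNorm_add_le ?_ ?_ hp) (add_le_add le_rfl ?_)
    · exact (hc.sub (Dd_continuous hcf _)).aestronglyMeasurable
    · have hfn : (∑ n ∈ Finset.range N, fun θ => Dd (β / 2 ^ (n + 1)) f θ - Dd (β / 2 ^ n) f θ)
          = fun θ => ∑ n ∈ Finset.range N, (Dd (β / 2 ^ (n + 1)) f θ - Dd (β / 2 ^ n) f θ) := by
        funext θ; simp [Finset.sum_apply]
      rw [hfn]
      apply Finset.aestronglyMeasurable_fun_sum
      exact fun n _ => ((Dd_continuous hcf _).sub (Dd_continuous hcf _)).aestronglyMeasurable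
    · exact eLpNorm_sum_le
        (fun n _ => ((Dd_continuous hcf _).sub (Dd_continuous hcf _)).aestronglyMeasurable) hp
  have hterm : ∀ n : ℕ, lpT p (fun θ => Dd (β / 2 ^ (n + 1)) f θ - Dd (β / 2 ^ n) f θ)
      ≤ 2⁻¹ * lpT p (dd (β / 2 ^ (n + 1)) (deriv f)) := by
    intro n
    have hrw : β / 2 ^ n = 2 * (β / 2 ^ (n + 1)) := by
      rw [pow_succ]
      field_simp
    rw [hrw]
    exact lpT_Dd_sub hf hper (div_ne_zero hβ (by positivity)) hp
  have hpartial : ∑ n ∈ Finset.range N, lpT p (fun θ => Dd (β / 2 ^ (n + 1)) f θ - Dd (β / 2 ^ n) f θ) ≤ S := by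
    calc _ ≤ ∑ n ∈ Finset.range N, 2⁻¹ * lpT p (dd (β / 2 ^ (n + 1)) (deriv f)) :=
          Finset.sum_le_sum fun n _ => hterm n
      _ ≤ S := ENNReal.sum_le_tsum _
  have hrem : lpT p (fun θ => deriv f θ - Dd (β / 2 ^ N) f θ) ≤ (ε : ℝ≥0∞) := by
    have hae : ∀ᵐ θ ∂tmeas, ‖deriv f θ - Dd (β / 2 ^ N) f θ‖ ≤ (ε:ℝ)/8 := by
      have hmem : ∀ᵐ θ ∂tmeas, θ ∈ Ioc (-π) π := ae_restrict_mem measurableSet_Ioc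
      filter_upwards [hmem] with θ hθ
      exact hN θ hθ
    have hb := eLpNorm_le_of_ae_bound (p := p) hae
    refine le_trans hb ?_
    have hM : tmeas univ ^ p.toReal⁻¹ ≤ ENNReal.ofReal 8 := by
      rw [tmeas_univ]
      have h2π : ENNReal.ofReal (2 * π) ≤ ENNReal.ofReal 8 :=
        ENNReal.ofReal_le_ofReal (by linarith [Real.pi_le_four])
      have h1 : (1:ℝ≥0∞) ≤ ENNReal.ofReal (2 * π) := by
        rw [← ENNReal.ofReal_one]
        exact ENNReal.ofReal_le_ofReal (by linarith [Real.pi_gt_three])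
      rcases eq_or_ne p ∞ with rfl | htop
      · simp only [ENNReal.toReal_top, inv_zero, ENNReal.rpow_zero]
        exact le_trans h1 h2π
      · have ht1 : 1 ≤ p.toReal := by
          rw [← ENNReal.toReal_one]
          exact ENNReal.toReal_mono htop hp
        have hinv : p.toReal⁻¹ ≤ 1 := by
          rw [inv_le_one_iff₀]
          right; exact ht1
        calc ENNReal.ofReal (2 * π) ^ p.toReal⁻¹
            ≤ ENNReal.ofReal (2 * π) ^ (1:ℝ) :=
              ENNReal.rpow_le_rpow_of_exponent_le h1 hinv
          _ = ENNReal.ofReal (2 * π) := ENNReal.rpow_one _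
          _ ≤ ENNReal.ofReal 8 := h2π
    calc tmeas univ ^ p.toReal⁻¹ * ENNReal.ofReal ((ε:ℝ)/8)
        ≤ ENNReal.ofReal 8 * ENNReal.ofReal ((ε:ℝ)/8) := mul_le_mul_left hM _
      _ = ENNReal.ofReal (8 * ((ε:ℝ)/8)) := (ENNReal.ofReal_mul (by norm_num)).symm
      _ = (ε : ℝ≥0∞) := by
          rw [show 8 * ((ε:ℝ)/8) = (ε:ℝ) by ring, ENNReal.ofReal_coe_nnreal]
  calc lpT p (fun θ => deriv f θ - Dd β f θ)
      ≤ lpT p (fun θ => deriv f θ - Dd (β / 2 ^ N) f θ) + ∑ n ∈ Finset.range N, lpT p (fun θ => Dd (β / 2 ^ (n + 1)) f θ - Dd (β / 2 ^ n) f θ) := hstep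
    _ ≤ (ε : ℝ≥0∞) + S := add_le_add hrem hpartial
    _ = S + ε := add_comm _ _


lemma bmeas_ae_ne_zero : ∀ᵐ β ∂bmeas, β ≠ 0 := by
  have h0 : bmeas {0} = 0 := by
    rw [bmeas, withDensity_apply _ (measurableSet_singleton 0)]
    have : tmeas {0} = 0 := by
      rw [tmeas, Measure.restrict_apply' measurableSet_Ioc]
      exact measure_mono_null inter_subset_left (Real.volume_singleton)
    exact setLIntegral_measure_zero _ _ this
  rw [ae_iff]
  convert h0 using 2
  ext β; simp

lemma eNorm_mono_ae {r : ℝ≥0∞} {g₁ g₂ : ℝ → ℝ≥0∞} (h : g₁ ≤ᵐ[bmeas] g₂) :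
    eNorm r g₁ ≤ eNorm r g₂ := by
  unfold eNorm
  split_ifs with hr
  · exact essSup_mono_ae h
  · refine ENNReal.rpow_le_rpow ?_ (by positivity)
    refine lintegral_mono_ae (h.mono fun β hβ => ?_)
    exact ENNReal.rpow_le_rpow hβ ENNReal.toReal_nonneg

lemma eNorm_congr_ae {r : ℝ≥0∞} {g₁ g₂ : ℝ → ℝ≥0∞} (h : g₁ =ᵐ[bmeas] g₂) :
    eNorm r g₁ = eNorm r g₂ :=
  le_antisymm (eNorm_mono_ae (h.le)) (eNorm_mono_ae (h.symm.le))

lemma eNorm_add_le {r : ℝ≥0∞} (hr : 1 ≤ r) {g₁ g₂ : ℝ → ℝ≥0∞}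
    (h₁ : AEMeasurable g₁ bmeas) (h₂ : AEMeasurable g₂ bmeas) :
    eNorm r (fun β => g₁ β + g₂ β) ≤ eNorm r g₁ + eNorm r g₂ := by
  unfold eNorm
  split_ifs with hrtop
  · refine essSup_le_of_ae_le _ ?_
    filter_upwards [ae_le_essSup (f := g₁) (μ := bmeas), ae_le_essSup (f := g₂) (μ := bmeas)]
      with β hb1 hb2
    exact add_le_add hb1 hb2
  · have hr1 : 1 ≤ r.toReal := by
      rw [← ENNReal.toReal_one]
      exact ENNReal.toReal_mono hrtop hr
    exact ENNReal.lintegral_Lp_add_le h₁ h₂ hr1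

lemma iSup_rpow_of_monotone {a : ℕ → ℝ≥0∞} (ha : Monotone a) {c : ℝ} (hc : 0 < c) :
    (⨆ n, a n) ^ c = ⨆ n, a n ^ c := by
  refine le_antisymm ?_ (iSup_le fun n => ENNReal.rpow_le_rpow (le_iSup a n) hc.le)
  have ht : Tendsto a atTop (𝓝 (⨆ n, a n)) := tendsto_atTop_iSup ha
  have h2 : Tendsto (fun n => a n ^ c) atTop (𝓝 ((⨆ n, a n) ^ c)) :=
    (ENNReal.continuous_rpow_const.tendsto _).comp ht
  exact le_of_tendsto h2 (Eventually.of_forall fun n => le_iSup (fun n => a n ^ c) n)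

lemma lintegral_Lp_sum_le {c : ℝ} (hc : 1 ≤ c) {g : ℕ → ℝ → ℝ≥0∞}
    (hg : ∀ n, AEMeasurable (g n) bmeas) (N : ℕ) :
    (∫⁻ β, (∑ n ∈ Finset.range N, g n β) ^ c ∂bmeas) ^ (1 / c)
      ≤ ∑ n ∈ Finset.range N, (∫⁻ β, g n β ^ c ∂bmeas) ^ (1 / c) := by
  have hc0 : (0:ℝ) < c := lt_of_lt_of_le one_pos hc
  induction N with
  | zero =>
      simp [Finset.range_zero, Finset.sum_empty, ENNReal.zero_rpow_of_pos hc0,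
        ENNReal.zero_rpow_of_pos (show (0:ℝ) < 1/c by positivity)]
      all_goals positivity
  | succ N ih =>
      simp only [Finset.sum_range_succ]
      refine le_trans (ENNReal.lintegral_Lp_add_le ?_ (hg N) hc) (add_le_add ih le_rfl)
      exact Finset.aemeasurable_fun_sum _ fun n _ => hg n

lemma eNorm_tsum_le {r : ℝ≥0∞} (hr : 1 ≤ r) {g : ℕ → ℝ → ℝ≥0∞}
    (hg : ∀ n, Measurable (g n)) :
    eNorm r (fun β => ∑' n, g n β) ≤ ∑' n, eNorm r (g n) := by
  unfold eNorm
  split_ifs with hrtop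
  · refine essSup_le_of_ae_le _ ?_
    have hae : ∀ᵐ β ∂bmeas, ∀ n : ℕ, g n β ≤ essSup (g n) bmeas := by
      rw [ae_all_iff]
      exact fun n => ae_le_essSup
    filter_upwards [hae] with β hβ
    exact ENNReal.tsum_le_tsum hβ
  · set c := r.toReal with hcdef
    have hc1 : 1 ≤ c := by
      rw [hcdef, ← ENNReal.toReal_one]
      exact ENNReal.toReal_mono hrtop hr
    have hc0 : (0:ℝ) < c := lt_of_lt_of_le one_pos hc1
    have hmono : Monotone fun N => fun β => (∑ n ∈ Finset.range N, g n β) ^ c := by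
      intro N M hNM β
      refine ENNReal.rpow_le_rpow ?_ hc0.le
      exact Finset.sum_le_sum_of_subset (Finset.range_subset_range.2 hNM)
    have hmeasN : ∀ N, Measurable fun β => (∑ n ∈ Finset.range N, g n β) ^ c :=
      fun N => (ENNReal.continuous_rpow_const.measurable).comp
        (Finset.measurable_sum _ fun n _ => hg n)
    have heq : ∫⁻ β, (∑' n, g n β) ^ c ∂bmeas
        = ⨆ N, ∫⁻ β, (∑ n ∈ Finset.range N, g n β) ^ c ∂bmeas := by
      rw [← lintegral_iSup hmeasN hmono]
      apply lintegral_congr fun β => ?_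
      have hms : Monotone fun N => ∑ n ∈ Finset.range N, g n β := fun N M h =>
        Finset.sum_le_sum_of_subset (Finset.range_subset_range.2 h)
      rw [ENNReal.tsum_eq_iSup_nat, iSup_rpow_of_monotone hms hc0]
    have hbound : ∀ N, (∫⁻ β, (∑ n ∈ Finset.range N, g n β) ^ c ∂bmeas) ^ (1/c)
        ≤ ∑' n, (∫⁻ β, g n β ^ c ∂bmeas) ^ (1/c) :=
      fun N => (lintegral_Lp_sum_le hc1 (fun n => (hg n).aemeasurable) N).trans
        (ENNReal.sum_le_tsum _)
    have h2 : ∀ N, ∫⁻ β, (∑ n ∈ Finset.range N, g n β) ^ c ∂bmeas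
        ≤ (∑' n, (∫⁻ β, g n β ^ c ∂bmeas) ^ (1/c)) ^ c := by
      intro N
      have h3 := ENNReal.rpow_le_rpow (hbound N) hc0.le
      rwa [← ENNReal.rpow_mul, one_div_mul_cancel hc0.ne', ENNReal.rpow_one] at h3
    rw [heq]
    refine le_trans (ENNReal.rpow_le_rpow (iSup_le h2) (by positivity : (0:ℝ) ≤ 1/c)) ?_
    rw [← ENNReal.rpow_mul, mul_one_div_cancel hc0.ne', ENNReal.rpow_one]

lemma eNorm_const_mul_le {r : ℝ≥0∞} (hr : r ≠ 0) (a : ℝ≥0∞) (ha : a ≠ ∞) (g : ℝ → ℝ≥0∞) :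
    eNorm r (fun β => a * g β) ≤ a * eNorm r g := by
  unfold eNorm
  split_ifs with hrtop
  · refine essSup_le_of_ae_le _ ?_
    filter_upwards [ae_le_essSup (f := g) (μ := bmeas)] with β hβ
    exact mul_le_mul_right hβ a
  · have hc0 : (0:ℝ) ≤ r.toReal := ENNReal.toReal_nonneg
    calc (∫⁻ β, (a * g β) ^ r.toReal ∂bmeas) ^ (1 / r.toReal)
        = (∫⁻ β, a ^ r.toReal * g β ^ r.toReal ∂bmeas) ^ (1 / r.toReal) := by
          congr 1
          apply lintegral_congr fun β => ?_
          exact ENNReal.mul_rpow_of_nonneg _ _ hc0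
      _ = (a ^ r.toReal * ∫⁻ β, g β ^ r.toReal ∂bmeas) ^ (1 / r.toReal) := by
          rw [lintegral_const_mul' _ _ (by simp [ENNReal.rpow_eq_top_iff, ha])]
      _ ≤ a * (∫⁻ β, g β ^ r.toReal ∂bmeas) ^ (1 / r.toReal) := by
          rw [ENNReal.mul_rpow_of_nonneg _ _ (by positivity : (0:ℝ) ≤ 1/r.toReal)]
          have h0 : r.toReal ≠ 0 := ENNReal.toReal_ne_zero.2 ⟨hr, hrtop⟩
          rw [← ENNReal.rpow_mul, mul_one_div_cancel h0, ENNReal.rpow_one]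
      
lemma map_scale_le {c : ℝ} (h0 : 0 < c) (h1 : c ≤ 1) :
    bmeas.map (fun β => c * β) ≤ bmeas := by
  have hcne : c ≠ 0 := h0.ne'
  refine Measure.le_iff.2 fun A hA => ?_
  rw [Measure.map_apply (measurable_const_mul c) hA]
  have hpre : MeasurableSet ((fun β => c * β) ⁻¹' A) := (measurable_const_mul c) hA
  have expand : ∀ (B : Set ℝ), MeasurableSet B → bmeas B
      = ∫⁻ β in B ∩ Ioc (-π) π, ENNReal.ofReal |β|⁻¹ ∂volume := by
    intro B hB
    rw [bmeas, withDensity_apply _ hB, tmeas, Measure.restrict_restrict hB]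
  rw [expand _ hpre, expand _ hA]
  set ψ : ℝ → ℝ≥0∞ := fun γ => ENNReal.ofReal |γ|⁻¹ with hψ
  have hψm : Measurable ψ := by
    apply Measurable.ennreal_ofReal
    exact (measurable_id.abs).inv
  set G : ℝ → ℝ≥0∞ := (A ∩ Ioc (-(c * π)) (c * π)).indicator
      (fun γ => ENNReal.ofReal c * ψ γ) with hG
  have hGm : Measurable G :=
    ((measurable_const.mul hψm).indicator (hA.inter measurableSet_Ioc))
  have hGcomp : ∀ β, G (c * β)
      = ((fun β => c * β) ⁻¹' A ∩ Ioc (-π) π).indicator ψ β := by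
    intro β
    have hmem : c * β ∈ A ∩ Ioc (-(c * π)) (c * π) ↔ β ∈ (fun β => c * β) ⁻¹' A ∩ Ioc (-π) π := by
      constructor
      · rintro ⟨hA', h2, h3⟩
        refine ⟨hA', ?_, ?_⟩
        · have : -(c * π) < c * β := h2
          nlinarith
        · exact le_of_mul_le_mul_left (by linarith) h0
      · rintro ⟨hA', h2, h3⟩
        refine ⟨hA', ?_, ?_⟩
        · show -(c * π) < c * β
          nlinarith
        · exact mul_le_mul_of_nonneg_left h3 h0.le
    simp only [hG]
    by_cases hm : β ∈ (fun β => c * β) ⁻¹' A ∩ Ioc (-π) π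
    · rw [indicator_of_mem (hmem.2 hm), indicator_of_mem hm]
      rw [hψ]
      simp only
      rw [abs_mul, abs_of_pos h0, mul_inv, ← ENNReal.ofReal_mul h0.le, ← mul_assoc,
        mul_inv_cancel₀ hcne, one_mul]
    · rw [indicator_of_notMem (fun hcc => hm (hmem.1 hcc)), indicator_of_notMem hm]
  calc ∫⁻ β in (fun β => c * β) ⁻¹' A ∩ Ioc (-π) π, ψ β ∂volume
      = ∫⁻ β, ((fun β => c * β) ⁻¹' A ∩ Ioc (-π) π).indicator ψ β ∂volume := by
        rw [lintegral_indicator]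
        exact hpre.inter measurableSet_Ioc
    _ = ∫⁻ β, G (c * β) ∂volume := by simp_rw [hGcomp]
    _ = ∫⁻ γ, G γ ∂(Measure.map (fun β => c * β) volume) :=
        (lintegral_map hGm (measurable_const_mul c)).symm
    _ = ENNReal.ofReal |c⁻¹| * ∫⁻ γ, G γ ∂volume := by
        rw [Real.map_volume_mul_left hcne, lintegral_smul_measure, smul_eq_mul]
    _ = ENNReal.ofReal |c⁻¹| * (ENNReal.ofReal c
          * ∫⁻ γ in A ∩ Ioc (-(c * π)) (c * π), ψ γ ∂volume) := by
        rw [hG, lintegral_indicator (hA.inter measurableSet_Ioc),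
          lintegral_const_mul' _ _ ENNReal.ofReal_ne_top]
    _ = ∫⁻ γ in A ∩ Ioc (-(c * π)) (c * π), ψ γ ∂volume := by
        rw [← mul_assoc, abs_of_pos (inv_pos.2 h0), ← ENNReal.ofReal_mul (inv_pos.2 h0).le,
          inv_mul_cancel₀ hcne, ENNReal.ofReal_one, one_mul]
    _ ≤ ∫⁻ γ in A ∩ Ioc (-π) π, ψ γ ∂volume := by
        apply lintegral_mono_set
        apply inter_subset_inter_right
        apply Ioc_subset_Ioc <;> nlinarith [Real.pi_pos]

lemma eNorm_scale_le (r : ℝ≥0∞) {H : ℝ → ℝ≥0∞} (hH : Measurable H)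
    {c : ℝ} (h0 : 0 < c) (h1 : c ≤ 1) :
    eNorm r (fun β => H (c * β)) ≤ eNorm r H := by
  have hmap := map_scale_le h0 h1
  have hac : bmeas.map (fun β => c * β) ≪ bmeas := Measure.absolutelyContinuous_of_le hmap
  unfold eNorm
  split_ifs with hrtop
  · refine le_trans ?_ (essSup_mono_measure hac)
    exact essSup_comp_le_essSup_map_measure (measurable_const_mul c).aemeasurable
  · refine ENNReal.rpow_le_rpow ?_ (by positivity)
    have hHm : Measurable fun γ => H γ ^ r.toReal :=
      ENNReal.continuous_rpow_const.measurable.comp hH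
    calc ∫⁻ β, H (c * β) ^ r.toReal ∂bmeas
        = ∫⁻ γ, H γ ^ r.toReal ∂(bmeas.map fun β => c * β) :=
          (lintegral_map hHm (measurable_const_mul c)).symm
      _ ≤ ∫⁻ γ, H γ ^ r.toReal ∂bmeas := lintegral_mono' hmap le_rfl


lemma Dd_periodic {f : ℝ → E2} (hper : Periodic f (2 * π)) (β : ℝ) :
    Periodic (Dd β f) (2 * π) := by
  intro x
  unfold Dd
  rw [show x + 2 * π + β = (x + β) + 2 * π by ring, hper, hper]

lemma lpT_measurable_param {F : ℝ → ℝ → E2} (hF : Measurable (Function.uncurry F))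
    (hFc : ∀ β, Continuous (F β)) (hFper : ∀ β, Periodic (F β) (2 * π)) (p : ℝ≥0∞) :
    Measurable fun β => lpT p (F β) := by
  rcases eq_or_ne p 0 with rfl | hp0
  · simp only [lpT, eLpNorm_exponent_zero]
    exact measurable_const
  rcases eq_or_ne p ∞ with rfl | hptop
  · have heq : (fun β => lpT ∞ (F β)) = fun β => ⨆ q : ℚ, (‖F β (q : ℝ)‖₊ : ℝ≥0∞) := by
      funext β
      rw [lpT, eLpNorm_exponent_top, eLpNormEssSup_periodic (hFc β) (hFper β),
        iSup_eq_iSup_rat (show Continuous fun θ => (‖F β θ‖₊ : ℝ≥0∞) from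
          ENNReal.continuous_coe.comp (hFc β).nnnorm)]
    rw [heq]
    refine Measurable.iSup fun q => ?_
    exact (hF.comp (measurable_id.prodMk measurable_const)).nnnorm.coe_nnreal_ennreal
  · have heq : (fun β => lpT p (F β))
        = fun β => (∫⁻ θ, (‖F β θ‖₊ : ℝ≥0∞) ^ p.toReal ∂tmeas) ^ (1 / p.toReal) := by
      funext β
      rw [lpT, eLpNorm_eq_lintegral_rpow_enorm_toReal hp0 hptop]
      rfl
    rw [heq]
    refine ENNReal.continuous_rpow_const.measurable.comp ?_
    apply Measurable.lintegral_prod_right (f := fun β θ => (‖F β θ‖₊ : ℝ≥0∞) ^ p.toReal)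
    exact ENNReal.continuous_rpow_const.measurable.comp hF.nnnorm.coe_nnreal_ennreal


/-- Lemma 3.2 (bounds for the averaged difference operators `δ_α^±`). -/
theorem averaged_difference_bounds :
    (∀ f : ℝ → E2, Periodic f (2 * π) → ContDiff ℝ 1 f →
      ∀ p : ℝ≥0∞, 1 ≤ p → ∀ α : ℝ, α ≠ 0 →
        lpT p (fun θ => deriv f θ - Dd α f θ) ≤ 2 * lpT p (deriv f) ∧
        lpT p (fun θ => deriv f (θ + α) - Dd α f θ) ≤ 4 * lpT p (deriv f) ∧
        lpT p (Dd α f) ≤ lpT p (deriv f)) ∧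
    ∀ s : ℝ, 0 < s → s < 1 → ∀ q : ℝ≥0∞, 1 ≤ q →
      ∃ C : ℝ, 0 < C ∧
        ∀ p : ℝ≥0∞, 1 ≤ p → ∀ f : ℝ → E2, Periodic f (2 * π) → ContDiff ℝ 1 f →
          eNorm q (fun β =>
              lpT p (fun θ => deriv f (θ + β) - Dd β f θ) / ENNReal.ofReal (|β| ^ s)) ≤
            ENNReal.ofReal C * besov s p q (deriv f) ∧
          eNorm q (fun β =>
              lpT p (fun θ => deriv f θ - Dd β f θ) / ENNReal.ofReal (|β| ^ s)) ≤
            ENNReal.ofReal C * besov s p q (deriv f) := by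
  constructor
  · -- Part (i)
    intro f hper hf p hp α hα
    have hcf : Continuous f := hf.continuous
    have hc : Continuous (deriv f) := hf.continuous_deriv le_rfl
    have hdper : Periodic (deriv f) (2 * π) := deriv_periodic hper
    have hDd : lpT p (Dd α f) ≤ lpT p (deriv f) := by
      have hDdeq : Dd α f = fun θ => ∫ t in (0:ℝ)..1, deriv f (θ + t * α) :=
        funext (Dd_eq_integral hf hα)
      rw [hDdeq]
      exact lpT_avg hc hdper α hp
    have hAd : AEStronglyMeasurable (deriv f) tmeas := hc.aestronglyMeasurable
    have hAD : AEStronglyMeasurable (Dd α f) tmeas := (Dd_continuous hcf α).aestronglyMeasurable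
    refine ⟨?_, ?_, hDd⟩
    · calc lpT p (fun θ => deriv f θ - Dd α f θ)
          ≤ lpT p (deriv f) + lpT p (Dd α f) := eLpNorm_sub_le hAd hAD hp
        _ ≤ lpT p (deriv f) + lpT p (deriv f) := add_le_add le_rfl hDd
        _ = 2 * lpT p (deriv f) := (two_mul _).symm
    · have htr : lpT p (fun θ => deriv f (θ + α)) = lpT p (deriv f) :=
        lpT_translate hc hdper p α
      calc lpT p (fun θ => deriv f (θ + α) - Dd α f θ)
          ≤ lpT p (fun θ => deriv f (θ + α)) + lpT p (Dd α f) :=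
            eLpNorm_sub_le (hc.comp (by fun_prop)).aestronglyMeasurable hAD hp
        _ ≤ lpT p (deriv f) + lpT p (deriv f) := add_le_add htr.le hDd
        _ = 2 * lpT p (deriv f) := (two_mul _).symm
        _ ≤ 4 * lpT p (deriv f) := mul_le_mul_left (by norm_num) _
  · -- Part (ii)
    intro s hs0 hs1 q hq
    have hq0 : q ≠ 0 := (lt_of_lt_of_le zero_lt_one hq).ne'
    set r : ℝ := (2:ℝ) ^ (-s) with hrdef
    have hr0 : 0 < r := Real.rpow_pos_of_pos two_pos _
    have hr1 : r < 1 := Real.rpow_lt_one_of_one_lt_of_neg one_lt_two (neg_neg_of_pos hs0)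
    set K : ℝ≥0∞ := ∑' n : ℕ, ENNReal.ofReal (r ^ (n + 1)) with hK
    have hKne : K ≠ ∞ := by
      have heq : ∀ n : ℕ, ENNReal.ofReal (r ^ (n + 1)) = ENNReal.ofReal r ^ (n + 1) :=
        fun n => ENNReal.ofReal_pow hr0.le _
      rw [hK]
      have : ∀ n : ℕ, ENNReal.ofReal r ^ (n + 1) = ENNReal.ofReal r * ENNReal.ofReal r ^ n :=
        fun n => pow_succ' _ _
      simp_rw [heq, this]
      rw [ENNReal.tsum_mul_left, ENNReal.tsum_geometric]
      apply ENNReal.mul_ne_top ENNReal.ofReal_ne_top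
      rw [Ne, ENNReal.inv_eq_top, tsub_eq_zero_iff_le]
      rw [not_le]
      exact ENNReal.ofReal_lt_one.2 hr1
    refine ⟨K.toReal + 2, by positivity, ?_⟩
    intro p hp f hper hf
    have hcf : Continuous f := hf.continuous
    have hc : Continuous (deriv f) := hf.continuous_deriv le_rfl
    have hdper : Periodic (deriv f) (2 * π) := deriv_periodic hper
    -- measurability of the two lpT functionals
    have homega : Measurable fun β => lpT p (dd β (deriv f)) := by
      apply lpT_measurable_param (F := fun β => dd β (deriv f))
      · show Measurable fun z : ℝ × ℝ => deriv f (z.2 + z.1) - deriv f z.2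
        fun_prop
      · exact fun β => dd_deriv_continuous hf β
      · exact fun β => dd_deriv_periodic hper β
    have hminusm : Measurable fun β => lpT p (fun θ => deriv f θ - Dd β f θ) := by
      apply lpT_measurable_param (F := fun β θ => deriv f θ - Dd β f θ)
      · show Measurable fun z : ℝ × ℝ => deriv f z.2 - (z.1)⁻¹ • (f (z.2 + z.1) - f z.2)
        apply Measurable.sub
        · exact (hc.comp continuous_snd).measurable
        · exact (measurable_fst.inv).smul
            (((hcf.comp (continuous_snd.add continuous_fst)).sub
              (hcf.comp continuous_snd)).measurable)
      · exact fun β => hc.sub (Dd_continuous hcf β)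
      · intro β x
        simp only
        rw [deriv_periodic hper x, Dd_periodic hper β x]
    have habs : Measurable fun γ : ℝ => ENNReal.ofReal (|γ| ^ s) :=
      Measurable.ennreal_ofReal
        ((Real.continuous_rpow_const hs0.le).comp continuous_abs).measurable
    set ω : ℝ → ℝ≥0∞ := fun γ => lpT p (dd γ (deriv f)) with homegadef
    set H : ℝ → ℝ≥0∞ := fun γ => ω γ / ENNReal.ofReal (|γ| ^ s) with hHdef
    have hHm : Measurable H := homega.div habs
    have hbesov : besov s p q (deriv f) = eNorm q H := by
      rw [besov, besovW]
      congr 1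
      funext β
      rw [ENNReal.ofReal_one, one_mul]
    have hscale : ∀ n : ℕ,
        eNorm q (fun β => ω (β / 2 ^ (n + 1)) / ENNReal.ofReal (|β| ^ s))
          ≤ ENNReal.ofReal (r ^ (n + 1)) * eNorm q H := by
      intro n
      set c : ℝ := ((2:ℝ) ^ (n + 1))⁻¹ with hcdef
      have hc0 : (0:ℝ) < c := by positivity
      have hc1 : c ≤ 1 := by
        rw [hcdef]
        exact inv_le_one_of_one_le₀ (one_le_pow₀ (by norm_num))
      have hcs : c ^ s = r ^ (n + 1) := by
        have e1 : c = (2:ℝ) ^ (-((n:ℝ) + 1)) := by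
          rw [hcdef, ← Real.rpow_natCast (2:ℝ) (n + 1),
            ← Real.rpow_neg (by norm_num : (0:ℝ) ≤ 2)]
          norm_num
        rw [e1, hrdef, ← Real.rpow_natCast ((2:ℝ) ^ (-s)) (n + 1),
          ← Real.rpow_mul (by norm_num : (0:ℝ) ≤ 2),
          ← Real.rpow_mul (by norm_num : (0:ℝ) ≤ 2)]
        congr 1
        push_cast
        ring
      have hfun : (fun β => ω (β / 2 ^ (n + 1)) / ENNReal.ofReal (|β| ^ s))
          = fun β => ENNReal.ofReal (c ^ s) * H (c * β) := by
        funext β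
        have hdiv : β / 2 ^ (n + 1) = c * β := by
          rw [hcdef, inv_mul_eq_div]
        rw [hdiv, hHdef]
        simp only
        have habsc : |c * β| ^ s = c ^ s * |β| ^ s := by
          rw [abs_mul, abs_of_pos hc0, Real.mul_rpow hc0.le (abs_nonneg β)]
        rw [habsc, ENNReal.ofReal_mul (by positivity : (0:ℝ) ≤ c ^ s), ← mul_div_assoc,
          ENNReal.mul_div_mul_left _ _ (ENNReal.ofReal_pos.2 (by positivity)).ne'
            ENNReal.ofReal_ne_top]
      rw [hfun]
      calc eNorm q (fun β => ENNReal.ofReal (c ^ s) * H (c * β))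
          ≤ ENNReal.ofReal (c ^ s) * eNorm q (fun β => H (c * β)) :=
            eNorm_const_mul_le hq0 _ ENNReal.ofReal_ne_top _
        _ ≤ ENNReal.ofReal (c ^ s) * eNorm q H :=
            mul_le_mul_right (eNorm_scale_le q hHm hc0 hc1) _
        _ = ENNReal.ofReal (r ^ (n + 1)) * eNorm q H := by rw [hcs]
    have hminus_bound :
        eNorm q (fun β => lpT p (fun θ => deriv f θ - Dd β f θ) / ENNReal.ofReal (|β| ^ s))
          ≤ K * eNorm q H := by
      have hae : (fun β => lpT p (fun θ => deriv f θ - Dd β f θ) / ENNReal.ofReal (|β| ^ s))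
          ≤ᵐ[bmeas] fun β => ∑' n : ℕ, (2⁻¹ * ω (β / 2 ^ (n + 1))) / ENNReal.ofReal (|β| ^ s) := by
        filter_upwards [bmeas_ae_ne_zero] with β hβ
        calc lpT p (fun θ => deriv f θ - Dd β f θ) / ENNReal.ofReal (|β| ^ s)
            ≤ (∑' n : ℕ, 2⁻¹ * ω (β / 2 ^ (n + 1))) / ENNReal.ofReal (|β| ^ s) :=
              ENNReal.div_le_div_right (key_dyadic hf hper hp hβ) _
          _ = ∑' n : ℕ, (2⁻¹ * ω (β / 2 ^ (n + 1))) / ENNReal.ofReal (|β| ^ s) := by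
              simp only [div_eq_mul_inv]
              exact ENNReal.tsum_mul_right.symm
      refine le_trans (eNorm_mono_ae hae) ?_
      have hmeasn : ∀ n : ℕ,
          Measurable fun β => (2⁻¹ * ω (β / 2 ^ (n + 1))) / ENNReal.ofReal (|β| ^ s) :=
        fun n => ((measurable_const.mul (homega.comp (measurable_id.div_const _))).div habs)
      refine le_trans (eNorm_tsum_le hq hmeasn) ?_
      calc ∑' n : ℕ, eNorm q (fun β => (2⁻¹ * ω (β / 2 ^ (n + 1))) / ENNReal.ofReal (|β| ^ s))
          ≤ ∑' n : ℕ, ENNReal.ofReal (r ^ (n + 1)) * eNorm q H := by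
            refine ENNReal.tsum_le_tsum fun n => ?_
            have e : (fun β => (2⁻¹ * ω (β / 2 ^ (n + 1))) / ENNReal.ofReal (|β| ^ s))
                = fun β => 2⁻¹ * (ω (β / 2 ^ (n + 1)) / ENNReal.ofReal (|β| ^ s)) := by
              funext β
              rw [mul_div_assoc]
            rw [e]
            calc eNorm q (fun β => 2⁻¹ * (ω (β / 2 ^ (n + 1)) / ENNReal.ofReal (|β| ^ s)))
                ≤ 2⁻¹ * eNorm q (fun β => ω (β / 2 ^ (n + 1)) / ENNReal.ofReal (|β| ^ s)) :=
                  eNorm_const_mul_le hq0 _ (by norm_num) _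
              _ ≤ 2⁻¹ * (ENNReal.ofReal (r ^ (n + 1)) * eNorm q H) :=
                  mul_le_mul_right (hscale n) _
              _ ≤ 1 * (ENNReal.ofReal (r ^ (n + 1)) * eNorm q H) :=
                  mul_le_mul_left (by norm_num : (2⁻¹:ℝ≥0∞) ≤ 1) _
              _ = ENNReal.ofReal (r ^ (n + 1)) * eNorm q H := one_mul _
        _ = K * eNorm q H := ENNReal.tsum_mul_right
    have hKle : K ≤ ENNReal.ofReal (K.toReal + 2) := by
      calc K = ENNReal.ofReal K.toReal := (ENNReal.ofReal_toReal hKne).symm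
        _ ≤ ENNReal.ofReal (K.toReal + 2) := ENNReal.ofReal_le_ofReal (by linarith)
    have hminus_final :
        eNorm q (fun β => lpT p (fun θ => deriv f θ - Dd β f θ) / ENNReal.ofReal (|β| ^ s))
          ≤ ENNReal.ofReal (K.toReal + 2) * besov s p q (deriv f) := by
      rw [hbesov]
      exact hminus_bound.trans (mul_le_mul_left hKle _)
    refine ⟨?_, hminus_final⟩
    have hplus_ae :
        (fun β => lpT p (fun θ => deriv f (θ + β) - Dd β f θ) / ENNReal.ofReal (|β| ^ s))
          ≤ᵐ[bmeas] fun β => H β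
            + lpT p (fun θ => deriv f θ - Dd β f θ) / ENNReal.ofReal (|β| ^ s) := by
      refine ae_of_all _ fun β => ?_
      have hsplit : lpT p (fun θ => deriv f (θ + β) - Dd β f θ)
          ≤ lpT p (dd β (deriv f)) + lpT p (fun θ => deriv f θ - Dd β f θ) := by
        have hfun2 : (fun θ => deriv f (θ + β) - Dd β f θ)
            = fun θ => dd β (deriv f) θ + (deriv f θ - Dd β f θ) := by
          funext θ
          simp only [dd]
          abel
        rw [lpT, hfun2]
        exact eLpNorm_add_le (dd_deriv_continuous hf β).aestronglyMeasurable
          ((hc.sub (Dd_continuous hcf β)).aestronglyMeasurable) hp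
      calc lpT p (fun θ => deriv f (θ + β) - Dd β f θ) / ENNReal.ofReal (|β| ^ s)
          ≤ (lpT p (dd β (deriv f)) + lpT p (fun θ => deriv f θ - Dd β f θ))
              / ENNReal.ofReal (|β| ^ s) := ENNReal.div_le_div_right hsplit _
        _ = H β + lpT p (fun θ => deriv f θ - Dd β f θ) / ENNReal.ofReal (|β| ^ s) := by
            rw [ENNReal.add_div, hHdef]
    calc eNorm q (fun β => lpT p (fun θ => deriv f (θ + β) - Dd β f θ) / ENNReal.ofReal (|β| ^ s))
        ≤ eNorm q (fun β => H β
            + lpT p (fun θ => deriv f θ - Dd β f θ) / ENNReal.ofReal (|β| ^ s)) :=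
          eNorm_mono_ae hplus_ae
      _ ≤ eNorm q H
            + eNorm q (fun β => lpT p (fun θ => deriv f θ - Dd β f θ) / ENNReal.ofReal (|β| ^ s)) :=
          eNorm_add_le hq hHm.aemeasurable (hminusm.div habs).aemeasurable
      _ ≤ eNorm q H + K * eNorm q H := add_le_add le_rfl hminus_bound
      _ = (1 + K) * eNorm q H := by rw [add_mul, one_mul]
      _ ≤ ENNReal.ofReal (K.toReal + 2) * besov s p q (deriv f) := by
          rw [hbesov]
          refine mul_le_mul_left ?_ _
          have e1 : (1:ℝ≥0∞) + K = ENNReal.ofReal (1 + K.toReal) := by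
            rw [ENNReal.ofReal_add (by norm_num) ENNReal.toReal_nonneg, ENNReal.ofReal_one,
              ENNReal.ofReal_toReal hKne]
          rw [e1]
          exact ENNReal.ofReal_le_ofReal (by linarith)


end Peskin
end
end
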